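/- arXiv:2103.07696 — 2 statements merged into one kernel-verified Lean document; each statement's English description precedes it below -/
import Mathlib

section
/- Let G=(V,E) be a finite tree with boundary δG containing x, and let f be a λ-flow to x on G. Suppose that f(z)=0 for some z∈δG∖{x}, or that f(z₁)f(z₂)<0 for some z₁,z₂∈δG∖{x}. Then there exists an edge (u,v) of G such that the branch H from (u,v) does not contain x and, writing G₁=H(u,v) and δG₁ for the set of degree-one vertices of G₁, either f(v)≤0 and f(s)>0 for all s∈δG₁∖{v}, or f(v)≥0 and f(s)<0 for all s∈δG₁∖{v}. As a consequence, λ > σ(G,x). -/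
open Finset

attribute [local instance] Classical.propDecidable

set_option linter.unusedSectionVars false

namespace Steklov

variable {V : Type} [Fintype V] [DecidableEq V]

/-- The boundary of a graph: the set of vertices of degree one. -/
noncomputable def bdry (G : SimpleGraph V) : Finset V :=
  Finset.univ.filter (fun v => G.degree v = 1)

/-- The graph Laplacian `Δf(x) = Σ_{y∼x} (f x - f y)`. -/
noncomputable def lap (G : SimpleGraph V) (f : V → ℝ) (x : V) : ℝ :=
  ∑ y ∈ G.neighborFinset x, (f x - f y)

/-- `f` is a Steklov eigenfunction of `G` with eigenvalue `lam`:
`f ≠ 0`, `Δf = 0` on the interior and `∂f/∂n = lam • f` on the boundary. -/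
noncomputable def IsEigenpair (G : SimpleGraph V) (lam : ℝ) (f : V → ℝ) : Prop :=
  f ≠ 0 ∧ (∀ x, x ∉ bdry G → lap G f x = 0) ∧ ∀ x ∈ bdry G, lap G f x = lam * f x

/-- The first nonzero Steklov eigenvalue of `G`. -/
noncomputable def lambda2 (G : SimpleGraph V) : ℝ :=
  sInf {lam : ℝ | 0 < lam ∧ ∃ f : V → ℝ, IsEigenpair G lam f}

/-- `f` is a `lam`-flow to `x` on `G`. -/
noncomputable def IsFlow (G : SimpleGraph V) (lam : ℝ) (x : V) (f : V → ℝ) : Prop :=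
  f ≠ 0 ∧ (∀ w, w ∉ bdry G → w ≠ x → lap G f w = 0) ∧
    ∀ w ∈ bdry G, w ≠ x → lap G f w = lam * f w

/-- The Rayleigh quotient of `f` (sum over undirected edges in the numerator). -/
noncomputable def rayleigh (G : SimpleGraph V) (f : V → ℝ) : ℝ :=
  ((∑ x, ∑ y ∈ G.neighborFinset x, (f x - f y) ^ 2) / 2) / ∑ x ∈ bdry G, f x ^ 2

/-- `Σ(G,x)`: the set of `lam ≥ 0` admitting a `lam`-flow `f` to `x` with `f x = 0`
which increases along edges pointing away from `x`. -/
def SigmaSet (G : SimpleGraph V) (x : V) : Set ℝ :=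
  {lam | 0 ≤ lam ∧ ∃ f : V → ℝ, IsFlow G lam x f ∧ f x = 0 ∧
    ∀ y z : V, G.Adj y z → G.dist x z < G.dist x y → f z < f y}

/-- `Σ̂(G,x)`: the set of `lam ≥ 0` admitting a `lam`-flow `f` to `x` with `f x = 0`. -/
def SigmaHatSet (G : SimpleGraph V) (x : V) : Set ℝ :=
  {lam | 0 ≤ lam ∧ ∃ f : V → ℝ, IsFlow G lam x f ∧ f x = 0}

/-- `σ(G,x) = inf Σ(G,x)`. -/
noncomputable def sigma (G : SimpleGraph V) (x : V) : ℝ := sInf (SigmaSet G x)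

/-- `σ̂(G,x) = inf Σ̂(G,x)`. -/
noncomputable def sigmaHat (G : SimpleGraph V) (x : V) : ℝ := sInf (SigmaHatSet G x)

/-- The vertex set of the branch from `(u,v)`: the connected component of `u`
after deleting the edge between `u` and `v`. -/
def branchSet (G : SimpleGraph V) (u v : V) : Set V :=
  {w | (G.deleteEdges {s(u, v)}).Reachable u w}

/-- The vertex set of the subtree `H(u,v)` spanned by the branch from `(u,v)` together
with `v`. -/
def branchClosed (G : SimpleGraph V) (u v : V) : Set V :=
  insert v (branchSet G u v)

/-- `σ(H(u,v), v)`, computed intrinsically in the subtree `H(u,v)`. -/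
noncomputable def sigmaB (G : SimpleGraph V) (u v : V) : ℝ :=
  sigma (G.induce (branchClosed G u v)) ⟨v, Set.mem_insert _ _⟩

/-- The double `(G)²_x` of `G` at `x`: two disjoint copies of `G` with the two
copies of `x` identified. -/
def doubleAt (G : SimpleGraph V) (x : V) : SimpleGraph (V ⊕ {v : V // v ≠ x}) where
  Adj a b :=
    match a, b with
    | Sum.inl u, Sum.inl w => G.Adj u w
    | Sum.inr u, Sum.inr w => G.Adj u.1 w.1
    | Sum.inl u, Sum.inr w => u = x ∧ G.Adj x w.1
    | Sum.inr u, Sum.inl w => w = x ∧ G.Adj x u.1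
  symm := by
    constructor
    rintro (u | u) (w | w) h
    · exact h.symm
    · exact h
    · exact h
    · exact h.symm
  loopless := by
    constructor
    rintro (u | u) h
    · exact G.loopless.irrefl u h
    · exact G.loopless.irrefl u.1 h

section Branch

variable {G : SimpleGraph V} {u v a b c d w y p q t x : V}

lemma walk_ind {G' : SimpleGraph V} {P : V → Prop}
    (hstep : ∀ p q, G'.Adj p q → P p → P q) :
    ∀ {a w : V}, G'.Walk a w → P a → P w := by
  intro a w p
  induction p with
  | nil => exact id
  | cons h q ih => exact fun hpa => ih (hstep _ _ h hpa)

lemma mem_branchSet_self : u ∈ branchSet G u v := SimpleGraph.Reachable.refl u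

lemma branchSet_swap_eq : branchSet G v u = {w | (G.deleteEdges {s(u, v)}).Reachable v w} := by
  unfold branchSet
  rw [Sym2.eq_swap]

lemma adj_mem_branchSet (hw : w ∈ branchSet G u v) (hadj : G.Adj w y)
    (hne : s(w, y) ≠ s(u, v)) : y ∈ branchSet G u v :=
  hw.trans (SimpleGraph.Adj.reachable (by
    rw [SimpleGraph.deleteEdges_adj]
    exact ⟨hadj, by simpa using hne⟩))

lemma branch_disjoint (hT : G.IsTree) (hadj : G.Adj u v)
    (h1 : w ∈ branchSet G u v) (h2 : w ∈ branchSet G v u) : False := by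
  have hb := (SimpleGraph.isAcyclic_iff_forall_adj_isBridge.mp hT.IsAcyclic) hadj
  rw [SimpleGraph.isBridge_iff] at hb
  have h2' : (G.deleteEdges {s(u, v)}).Reachable v w := by
    rw [branchSet_swap_eq] at h2; exact h2
  exact hb (h1.trans h2'.symm)

lemma not_mem_branchSet_other (hT : G.IsTree) (hadj : G.Adj u v) :
    v ∉ branchSet G u v :=
  fun h => branch_disjoint hT hadj h mem_branchSet_self

lemma branch_dichotomy (hc : G.Connected) (hadj : G.Adj u v) (w : V) :
    w ∈ branchSet G u v ∨ w ∈ branchSet G v u := by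
  obtain ⟨pw⟩ := hc u w
  refine walk_ind (P := fun t => t ∈ branchSet G u v ∨ t ∈ branchSet G v u)
    ?_ pw (Or.inl mem_branchSet_self)
  intro p q hpq hp
  by_cases he : s(p, q) = s(u, v)
  · rw [Sym2.eq_iff] at he
    rcases he with ⟨rfl, rfl⟩ | ⟨rfl, rfl⟩
    · exact Or.inr mem_branchSet_self
    · exact Or.inl mem_branchSet_self
  · rcases hp with hp | hp
    · exact Or.inl (adj_mem_branchSet hp hpq he)
    · refine Or.inr (adj_mem_branchSet hp hpq ?_)
      intro hcontra
      exact he (by rw [hcontra, Sym2.eq_swap])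
  
lemma branch_cross (hT : G.IsTree) (hadj : G.Adj u v)
    (hp : p ∈ branchSet G u v) (hq : q ∉ branchSet G u v) (hpq : G.Adj p q) :
    p = u ∧ q = v := by
  by_cases he : s(p, q) = s(u, v)
  · rw [Sym2.eq_iff] at he
    rcases he with ⟨rfl, rfl⟩ | ⟨rfl, rfl⟩
    · exact ⟨rfl, rfl⟩
    · exact absurd hp (not_mem_branchSet_other hT hadj)
  · exact absurd (adj_mem_branchSet hp hpq he) hq

lemma branch_step (hT : G.IsTree) (hab : G.Adj a b) (haw : G.Adj a w) (hwb : w ≠ b) :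
    w ∈ branchSet G a b ∧ branchSet G w a ⊆ branchSet G a b \ {a} := by
  have hwa : w ∈ branchSet G a b := by
    refine adj_mem_branchSet mem_branchSet_self haw ?_
    intro hcontra
    rw [Sym2.eq_iff] at hcontra
    rcases hcontra with ⟨-, rfl⟩ | ⟨rfl, -⟩
    · exact hwb rfl
    · exact G.loopless.irrefl a hab
  have hanot : a ∉ branchSet G w a := fun h =>
    branch_disjoint hT haw.symm h mem_branchSet_self
  refine ⟨hwa, fun t ht => ?_⟩
  obtain ⟨pw⟩ := ht
  have key : t ∈ branchSet G a b ∧ t ∈ branchSet G w a := by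
    refine walk_ind (P := fun s => s ∈ branchSet G a b ∧ s ∈ branchSet G w a)
      ?_ pw ⟨hwa, mem_branchSet_self⟩
    intro p q hpq hp
    have hq2 : q ∈ branchSet G w a := hp.2.trans hpq.reachable
    have hpq' : G.Adj p q := (SimpleGraph.deleteEdges_adj.mp hpq).1
    refine ⟨?_, hq2⟩
    by_contra hq1
    obtain ⟨rfl, -⟩ := branch_cross hT hab hp.1 hq1 hpq'
    exact hanot hp.2
  exact ⟨key.1, fun h => hanot (h ▸ key.2)⟩

lemma branch_decomp (ht : t ∈ branchSet G a b) (hta : t ≠ a) :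
    ∃ w, G.Adj a w ∧ w ≠ b ∧ t ∈ branchSet G w a := by
  obtain ⟨p0⟩ := ht
  have hpath := p0.bypass_isPath
  set p := p0.bypass with hp
  clear_value p
  cases p with
  | nil => exact absurd rfl hta.symm
  | @cons _ w _ h q =>
    rw [SimpleGraph.Walk.cons_isPath_iff] at hpath
    rw [SimpleGraph.deleteEdges_adj] at h
    have hwb : w ≠ b := by
      rintro rfl
      exact h.2 rfl
    refine ⟨w, h.1, hwb, ?_⟩
    refine ⟨q.transfer _ ?_⟩
    intro e he
    have heG : e ∈ G.edgeSet := by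
      have := q.edges_subset_edgeSet he
      rw [SimpleGraph.edgeSet_deleteEdges] at this
      exact this.1
    rw [SimpleGraph.edgeSet_deleteEdges]
    refine ⟨heG, ?_⟩
    intro hmem
    rw [Set.mem_singleton_iff] at hmem
    subst hmem
    exact hpath.2 (q.snd_mem_support_of_mem_edges he)

lemma leaf_neighborFinset (hc : G.degree c = 1) (hcd : G.Adj c d) :
    G.neighborFinset c = {d} := by
  have hd : d ∈ G.neighborFinset c := by rwa [SimpleGraph.mem_neighborFinset]
  rw [SimpleGraph.degree] at hc
  obtain ⟨e, he⟩ := Finset.card_eq_one.mp hc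
  rw [he] at hd ⊢
  rw [Finset.mem_singleton] at hd
  rw [hd]

lemma leaf_branchSet (hc : G.degree c = 1) (hcd : G.Adj c d) :
    branchSet G c d = {c} := by
  ext t
  simp only [Set.mem_singleton_iff]
  constructor
  · rintro ⟨pw⟩
    refine walk_ind (P := fun s => s = c) ?_ pw rfl
    intro p q hpq hpc
    rw [hpc] at hpq
    have hpq' : G.Adj c q := (SimpleGraph.deleteEdges_adj.mp hpq).1
    have : q ∈ G.neighborFinset c := by rwa [SimpleGraph.mem_neighborFinset]
    rw [leaf_neighborFinset hc hcd, Finset.mem_singleton] at this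
    subst this
    exact absurd rfl (SimpleGraph.deleteEdges_adj.mp hpq).2
  · rintro rfl
    exact mem_branchSet_self

lemma branch_top (hT : G.IsTree) (hx : G.degree x = 1) (hux : G.Adj u x) :
    branchSet G u x = {w | w ≠ x} := by
  ext w
  simp only [Set.mem_setOf_eq]
  constructor
  · rintro hw rfl
    exact branch_disjoint hT hux hw mem_branchSet_self
  · intro hwx
    rcases branch_dichotomy hT.isConnected hux w with h | h
    · exact h
    · rw [leaf_branchSet hx hux.symm] at h
      exact absurd h hwx

end Branch

section Sums

variable {G : SimpleGraph V} {u v x : V} {f g : V → ℝ} {lam mu : ℝ}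

lemma sum_nbr_swap (S : Finset V) (F : V → V → ℝ) :
    ∑ w ∈ S, ∑ y ∈ (G.neighborFinset w).filter (· ∈ S), F w y
      = ∑ w ∈ S, ∑ y ∈ (G.neighborFinset w).filter (· ∈ S), F y w := by
  have key : ∀ F' : V → V → ℝ,
      ∑ w ∈ S, ∑ y ∈ (G.neighborFinset w).filter (· ∈ S), F' w y
        = ∑ w ∈ S, ∑ y ∈ S, if G.Adj w y then F' w y else 0 := by
    intro F'
    refine Finset.sum_congr rfl fun w _ => ?_
    have hsetEq : (G.neighborFinset w).filter (· ∈ S) = S.filter (G.Adj w ·) := by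
      ext y
      simp only [Finset.mem_filter, SimpleGraph.mem_neighborFinset]
      tauto
    rw [hsetEq, Finset.sum_filter]
  rw [key, key]
  rw [Finset.sum_comm]
  refine Finset.sum_congr rfl fun w _ => Finset.sum_congr rfl fun y _ => ?_
  by_cases h : G.Adj w y
  · rw [if_pos h, if_pos h.symm]
  · rw [if_neg h, if_neg fun h' => h h'.symm]

lemma sum_nbr_antisymm (S : Finset V) (A : V → V → ℝ)
    (hA : ∀ p q : V, A p q = - A q p) :
    ∑ w ∈ S, ∑ y ∈ (G.neighborFinset w).filter (· ∈ S), A w y = 0 := by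
  have h1 := sum_nbr_swap (G := G) S A
  have h2 : ∑ w ∈ S, ∑ y ∈ (G.neighborFinset w).filter (· ∈ S), A y w
      = - ∑ w ∈ S, ∑ y ∈ (G.neighborFinset w).filter (· ∈ S), A w y := by
    rw [← Finset.sum_neg_distrib]
    refine Finset.sum_congr rfl fun w _ => ?_
    rw [← Finset.sum_neg_distrib]
    exact Finset.sum_congr rfl fun y _ => by rw [hA y w]
  rw [h2] at h1
  linarith

lemma sum_lap_univ (f : V → ℝ) : ∑ w : V, lap G f w = 0 := by
  have : ∀ w : V, (G.neighborFinset w).filter (· ∈ (Finset.univ : Finset V))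
      = G.neighborFinset w := by
    intro w; simp
  have h := sum_nbr_antisymm (G := G) Finset.univ (fun p q => f p - f q)
    (fun p q => by ring)
  simp only [this] at h
  exact h

lemma harmonic_constant (hc : G.Connected) (hlap : ∀ w : V, lap G f w = 0) :
    ∀ w y : V, f w = f y := by
  have hE : ∑ w : V, ∑ y ∈ G.neighborFinset w, (f w - f y)^2 = 0 := by
    have e1 : ∑ w : V, ∑ y ∈ G.neighborFinset w, f w * (f w - f y) = 0 := by
      have : ∀ w : V, ∑ y ∈ G.neighborFinset w, f w * (f w - f y)
          = f w * lap G f w := by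
        intro w; rw [lap, Finset.mul_sum]
      rw [Finset.sum_congr rfl fun w _ => this w]
      exact Finset.sum_eq_zero fun w _ => by rw [hlap w, mul_zero]
    have hfil : ∀ w : V, (G.neighborFinset w).filter (· ∈ (Finset.univ : Finset V))
        = G.neighborFinset w := by intro w; simp
    have e2 : ∑ w : V, ∑ y ∈ G.neighborFinset w, f y * (f w - f y) = 0 := by
      have h := sum_nbr_swap (G := G) Finset.univ (fun p q => f q * (f p - f q))
      simp only [hfil] at h
      have e2' : ∑ w : V, ∑ y ∈ G.neighborFinset w, f w * (f y - f w) = 0 := by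
        have : ∀ w : V, ∑ y ∈ G.neighborFinset w, f w * (f y - f w)
            = - (f w * lap G f w) := by
          intro w
          rw [lap, Finset.mul_sum, ← Finset.sum_neg_distrib]
          exact Finset.sum_congr rfl fun y _ => by ring
        rw [Finset.sum_congr rfl fun w _ => this w]
        exact Finset.sum_eq_zero fun w _ => by rw [hlap w, mul_zero, neg_zero]
      calc ∑ w : V, ∑ y ∈ G.neighborFinset w, f y * (f w - f y)
          = ∑ w : V, ∑ y ∈ G.neighborFinset w, f w * (f y - f w) := h
        _ = 0 := e2'
    have : ∑ w : V, ∑ y ∈ G.neighborFinset w, (f w - f y)^2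
        = ∑ w : V, ∑ y ∈ G.neighborFinset w,
            (f w * (f w - f y) - f y * (f w - f y)) := by
      refine Finset.sum_congr rfl fun w _ => Finset.sum_congr rfl fun y _ => by ring
    rw [this]
    simp only [Finset.sum_sub_distrib]
    rw [e1, e2, sub_zero]
  have hzero : ∀ w : V, ∀ y ∈ G.neighborFinset w, (f w - f y)^2 = 0 := by
    have h1 := (Finset.sum_eq_zero_iff_of_nonneg
      (fun w _ => Finset.sum_nonneg fun y _ => sq_nonneg (f w - f y))).mp hE
    intro w y hy
    exact (Finset.sum_eq_zero_iff_of_nonneg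
      (fun y _ => sq_nonneg (f w - f y))).mp (h1 w (Finset.mem_univ w)) y hy
  intro w y
  obtain ⟨pw⟩ := hc w y
  refine (walk_ind (P := fun t => f w = f t) ?_ pw rfl)
  intro p q hpq hfp
  have : (f p - f q)^2 = 0 := hzero p q (by rwa [SimpleGraph.mem_neighborFinset])
  have := sub_eq_zero.mp (pow_eq_zero_iff (n := 2) (by norm_num) |>.mp this)
  rw [hfp, this]

lemma lap_sub_const (c : ℝ) (w : V) :
    lap G (fun y => f y - c) w = lap G f w := by
  unfold lap
  exact Finset.sum_congr rfl fun y _ => by ring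

lemma lap_neg (w : V) : lap G (fun y => - f y) w = - lap G f w := by
  unfold lap
  rw [← Finset.sum_neg_distrib]
  exact Finset.sum_congr rfl fun y _ => by ring

lemma green_raw (hT : G.IsTree) (hadj : G.Adj u v) (F H : V → ℝ) :
    ∑ w ∈ Finset.univ.filter (· ∈ branchSet G u v),
        (H w * lap G F w - F w * lap G H w)
      = F u * H v - H u * F v := by
  set S : Finset V := Finset.univ.filter (· ∈ branchSet G u v) with hS
  have hmemS : ∀ w : V, w ∈ S ↔ w ∈ branchSet G u v := by
    intro w; simp [hS]
  have expand : ∀ w : V, H w * lap G F w - F w * lap G H w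
      = ∑ y ∈ G.neighborFinset w, (F w * H y - H w * F y) := by
    intro w
    unfold lap
    rw [Finset.mul_sum, Finset.mul_sum, ← Finset.sum_sub_distrib]
    exact Finset.sum_congr rfl fun y _ => by ring
  rw [Finset.sum_congr rfl fun w _ => expand w]
  have split : ∀ w : V, ∑ y ∈ G.neighborFinset w, (F w * H y - H w * F y)
      = (∑ y ∈ (G.neighborFinset w).filter (· ∈ S), (F w * H y - H w * F y))
        + ∑ y ∈ (G.neighborFinset w).filter (¬ · ∈ S), (F w * H y - H w * F y) := by
    intro w
    rw [Finset.sum_filter_add_sum_filter_not]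
  rw [Finset.sum_congr rfl fun w _ => split w, Finset.sum_add_distrib]
  rw [sum_nbr_antisymm S _ (fun p q => by ring), zero_add]
  -- cross term
  have huS : u ∈ S := (hmemS u).mpr mem_branchSet_self
  have hvS : v ∉ S := fun h => not_mem_branchSet_other hT hadj ((hmemS v).mp h)
  have hout : ∑ w ∈ S, ∑ y ∈ (G.neighborFinset w).filter (¬ · ∈ S),
      (F w * H y - H w * F y)
      = ∑ y ∈ (G.neighborFinset u).filter (¬ · ∈ S), (F u * H y - H u * F y) := by
    refine Finset.sum_eq_single_of_mem u huS ?_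
    intro w hw hwu
    refine Finset.sum_eq_zero fun y hy => ?_
    rw [Finset.mem_filter, SimpleGraph.mem_neighborFinset] at hy
    exact absurd (branch_cross hT hadj ((hmemS w).mp hw)
      (fun h => hy.2 ((hmemS y).mpr h)) hy.1).1 hwu
  rw [hout]
  have hvmem : v ∈ (G.neighborFinset u).filter (¬ · ∈ S) := by
    rw [Finset.mem_filter, SimpleGraph.mem_neighborFinset]
    exact ⟨hadj, fun h => hvS h⟩
  refine Finset.sum_eq_single_of_mem v hvmem ?_
  intro y hy hyv
  rw [Finset.mem_filter, SimpleGraph.mem_neighborFinset] at hy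
  exact absurd (branch_cross hT hadj ((hmemS u).mp huS)
    (fun h => hy.2 ((hmemS y).mpr h)) hy.1).2 hyv

end Sums

section Induction

variable {G : SimpleGraph V} {x a b c d w : V} {lam : ℝ} {f : V → ℝ}

lemma branch_card_lt (hT : G.IsTree) (hab : G.Adj a b) (haw : G.Adj a w) (hwb : w ≠ b) :
    (Finset.univ.filter (· ∈ branchSet G w a)).card
      < (Finset.univ.filter (· ∈ branchSet G a b)).card := by
  have hstep := branch_step hT hab haw hwb
  refine Finset.card_lt_card ?_
  rw [Finset.ssubset_iff_of_subset ?_]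
  · refine ⟨a, ?_, ?_⟩
    · simp only [Finset.mem_filter, Finset.mem_univ, true_and]
      exact mem_branchSet_self
    · simp only [Finset.mem_filter, Finset.mem_univ, true_and]
      exact fun h => (hstep.2 h).2 rfl
  · intro t htm
    simp only [Finset.mem_filter, Finset.mem_univ, true_and] at htm ⊢
    exact (hstep.2 htm).1

lemma interior_other_nbr (hcb : c ∉ bdry G) (hcd : G.Adj c d) :
    ∃ w0, G.Adj c w0 ∧ w0 ≠ d := by
  have hd_mem : d ∈ G.neighborFinset c := by rwa [SimpleGraph.mem_neighborFinset]
  have hdeg1 : 1 < (G.neighborFinset c).card := by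
    have h0 : 0 < (G.neighborFinset c).card := Finset.card_pos.mpr ⟨d, hd_mem⟩
    have hne : (G.neighborFinset c).card ≠ 1 := by
      have hrfl : G.degree c = (G.neighborFinset c).card := rfl
      intro h
      exact hcb (by simp only [bdry, Finset.mem_filter, Finset.mem_univ, true_and, hrfl, h])
    omega
  obtain ⟨w0, hw0mem, hw0d⟩ := Finset.exists_mem_ne hdeg1 d
  exact ⟨w0, (SimpleGraph.mem_neighborFinset G c w0).mp hw0mem, hw0d⟩

lemma vanishing (hT : G.IsTree)
    (hbd : ∀ w ∈ bdry G, w ≠ x → lap G f w = lam * f w)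
    (hint : ∀ w, w ∉ bdry G → w ≠ x → lap G f w = 0) :
    ∀ n : ℕ, ∀ c d : V, (Finset.univ.filter (· ∈ branchSet G c d)).card = n →
      G.Adj c d → x ∉ branchSet G c d →
      (∀ z ∈ branchSet G c d, z ∈ bdry G → f z = 0) →
      f d = 0 ∧ ∀ w ∈ branchSet G c d, f w = 0 := by
  intro n
  induction n using Nat.strong_induction_on with
  | _ n IH =>
  intro c d hcard hcd hx hzero
  have hcx : c ≠ x := fun h => hx (h ▸ mem_branchSet_self)
  by_cases hcb : c ∈ bdry G
  · have hdeg : G.degree c = 1 := by simpa [bdry] using hcb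
    have hbr := leaf_branchSet hdeg hcd
    have hfc : f c = 0 := hzero c mem_branchSet_self hcb
    have hlapc := hbd c hcb hcx
    rw [lap, leaf_neighborFinset hdeg hcd, Finset.sum_singleton, hfc, mul_zero] at hlapc
    constructor
    · linarith
    · intro w hw
      rw [hbr, Set.mem_singleton_iff] at hw
      rw [hw, hfc]
  · have hsubbr : ∀ w, G.Adj c w → w ≠ d →
        (f c = 0 ∧ ∀ t ∈ branchSet G w c, f t = 0) := by
      intro w hcw hwd
      have hlt := branch_card_lt hT hcd hcw hwd
      rw [hcard] at hlt
      have hsub := (branch_step hT hcd hcw hwd).2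
      exact IH _ hlt w c rfl hcw.symm (fun hxm => hx (hsub hxm).1)
        (fun z hz hzb => hzero z (hsub hz).1 hzb)
    obtain ⟨w0, hcw0, hw0d⟩ := interior_other_nbr hcb hcd
    have hfc : f c = 0 := (hsubbr w0 hcw0 hw0d).1
    have hall : ∀ w ∈ branchSet G c d, f w = 0 := by
      intro w hw
      by_cases hwc : w = c
      · rw [hwc]; exact hfc
      · obtain ⟨w', hcw', hw'd, hw'⟩ := branch_decomp hw hwc
        exact (hsubbr w' hcw' hw'd).2 w hw'
    refine ⟨?_, hall⟩
    have hlapc := hint c hcb hcx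
    rw [lap] at hlapc
    have hd_mem : d ∈ G.neighborFinset c := by rwa [SimpleGraph.mem_neighborFinset]
    have h1 : ∑ y ∈ G.neighborFinset c, (f c - f y)
        = ∑ y ∈ G.neighborFinset c, (0 - f y) :=
      Finset.sum_congr rfl fun y _ => by rw [hfc]
    rw [h1] at hlapc
    simp only [zero_sub, Finset.sum_neg_distrib] at hlapc
    have hsum : ∑ y ∈ G.neighborFinset c, f y = f d := by
      refine Finset.sum_eq_single_of_mem d hd_mem ?_
      intro y hy hyd
      exact (hsubbr y ((SimpleGraph.mem_neighborFinset G c y).mp hy) hyd).2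
        y mem_branchSet_self
    rw [hsum] at hlapc
    linarith

lemma branch_leaf_exists (hT : G.IsTree) :
    ∀ n : ℕ, ∀ a b : V, (Finset.univ.filter (· ∈ branchSet G a b)).card = n →
      G.Adj a b → ∃ z ∈ branchSet G a b, z ∈ bdry G := by
  intro n
  induction n using Nat.strong_induction_on with
  | _ n IH =>
  intro a b hcard hab
  by_cases hcb : a ∈ bdry G
  · exact ⟨a, mem_branchSet_self, hcb⟩
  · obtain ⟨w0, haw0, hw0b⟩ := interior_other_nbr hcb hab
    have hlt := branch_card_lt hT hab haw0 hw0b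
    rw [hcard] at hlt
    obtain ⟨z, hz, hzb⟩ := IH _ hlt w0 a rfl haw0.symm
    exact ⟨z, ((branch_step hT hab haw0 hw0b).2 hz).1, hzb⟩

end Induction

section MainInd

variable {G : SimpleGraph V} {x : V}

lemma flow_sign_branch (hT : G.IsTree) (x : V) :
    ∀ n : ℕ, ∀ f : V → ℝ, ∀ lam : ℝ,
      (∀ w ∈ bdry G, w ≠ x → lap G f w = lam * f w) →
      (∀ w, w ∉ bdry G → w ≠ x → lap G f w = 0) →
      ∀ a b : V, (Finset.univ.filter (· ∈ branchSet G a b)).card = n →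
      G.Adj a b → x ∉ branchSet G a b →
      (∃ z ∈ branchSet G a b, z ∈ bdry G ∧ 0 < f z) →
      (∃ z ∈ branchSet G a b, z ∈ bdry G ∧ f z ≤ 0) →
      ∃ u v : V, G.Adj u v ∧ x ∉ branchSet G u v ∧
        branchSet G u v ⊆ branchSet G a b ∧
        ((f v ≤ 0 ∧ ∀ z ∈ branchSet G u v, z ∈ bdry G → 0 < f z) ∨
         (0 ≤ f v ∧ ∀ z ∈ branchSet G u v, z ∈ bdry G → f z < 0)) := by
  intro n
  induction n using Nat.strong_induction_on with
  | _ n IH =>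
  intro f lam hbd hint a b hcard hab hx hpos hneg
  by_cases hableaf : a ∈ bdry G
  · -- branch is a singleton; contradiction
    have hdeg : G.degree a = 1 := by simpa [bdry] using hableaf
    have hbr := leaf_branchSet hdeg hab
    obtain ⟨zp, hzp, -, hzppos⟩ := hpos
    obtain ⟨zn, hzn, -, hznneg⟩ := hneg
    rw [hbr, Set.mem_singleton_iff] at hzp hzn
    rw [hzp] at hzppos
    rw [hzn] at hznneg
    linarith
  · -- a is interior
    have neg_hbd : ∀ w ∈ bdry G, w ≠ x → lap G (fun y => - f y) w = lam * (- f w) := by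
      intro w hw hwx
      rw [lap_neg, hbd w hw hwx]
      ring
    have neg_hint : ∀ w, w ∉ bdry G → w ≠ x → lap G (fun y => - f y) w = 0 := by
      intro w hw hwx
      rw [lap_neg, hint w hw hwx, neg_zero]
    by_cases hfa : f a ≤ 0
    · -- look at the branch containing a positive leaf
      obtain ⟨zp, hzp, hzpb, hzppos⟩ := hpos
      have hzpa : zp ≠ a := fun h => hableaf (h ▸ hzpb)
      obtain ⟨w, haw, hwb, hzpw⟩ := branch_decomp hzp hzpa
      have hsub := (branch_step hT hab haw hwb).2
      have hsub' : branchSet G w a ⊆ branchSet G a b := fun t ht => (hsub ht).1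
      have hlt := branch_card_lt hT hab haw hwb
      rw [hcard] at hlt
      have hxw : x ∉ branchSet G w a := fun h => hx (hsub' h)
      by_cases hneg' : ∃ z ∈ branchSet G w a, z ∈ bdry G ∧ f z ≤ 0
      · obtain ⟨u, v, h1, h2, h3, h4⟩ := IH _ hlt f lam hbd hint w a rfl haw.symm hxw
          ⟨zp, hzpw, hzpb, hzppos⟩ hneg'
        exact ⟨u, v, h1, h2, h3.trans hsub', h4⟩
      · push_neg at hneg'
        refine ⟨w, a, haw.symm, hxw, hsub', Or.inl ⟨hfa, ?_⟩⟩
        intro z hz hzb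
        exact hneg' z hz hzb
    · push_neg at hfa
      obtain ⟨zn, hzn, hznb, hznneg⟩ := hneg
      have hzna : zn ≠ a := fun h => hableaf (h ▸ hznb)
      obtain ⟨w, haw, hwb, hznw⟩ := branch_decomp hzn hzna
      have hsub := (branch_step hT hab haw hwb).2
      have hsub' : branchSet G w a ⊆ branchSet G a b := fun t ht => (hsub ht).1
      have hlt := branch_card_lt hT hab haw hwb
      rw [hcard] at hlt
      have hxw : x ∉ branchSet G w a := fun h => hx (hsub' h)
      by_cases hpos' : ∃ z ∈ branchSet G w a, z ∈ bdry G ∧ 0 < f z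
      · obtain ⟨u, v, h1, h2, h3, h4⟩ := IH _ hlt f lam hbd hint w a rfl haw.symm hxw
          hpos' ⟨zn, hznw, hznb, hznneg⟩
        exact ⟨u, v, h1, h2, h3.trans hsub', h4⟩
      · push_neg at hpos'
        by_cases hstrict : ∃ z ∈ branchSet G w a, z ∈ bdry G ∧ f z < 0
        · by_cases hzero : ∃ z ∈ branchSet G w a, z ∈ bdry G ∧ 0 ≤ f z
          · -- mixed for -f : apply IH to -f
            obtain ⟨zs, hzs, hzsb, hzsneg⟩ := hstrict
            obtain ⟨zz, hzz, hzzb, hzznn⟩ := hzero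
            obtain ⟨u, v, h1, h2, h3, h4⟩ := IH _ hlt (fun y => - f y) lam
              neg_hbd neg_hint w a rfl haw.symm hxw
              ⟨zs, hzs, hzsb, by show (0:ℝ) < - f zs; linarith⟩
              ⟨zz, hzz, hzzb, by show - f zz ≤ (0:ℝ); linarith⟩
            refine ⟨u, v, h1, h2, h3.trans hsub', ?_⟩
            rcases h4 with ⟨h5, h6⟩ | ⟨h5, h6⟩
            · have h5' : - f v ≤ 0 := h5
              exact Or.inr ⟨by linarith, fun z hz hzb => by
                have h6' : (0:ℝ) < - f z := h6 z hz hzb; linarith⟩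
            · have h5' : (0:ℝ) ≤ - f v := h5
              exact Or.inl ⟨by linarith, fun z hz hzb => by
                have h6' : - f z < (0:ℝ) := h6 z hz hzb; linarith⟩
          · push_neg at hzero
            refine ⟨w, a, haw.symm, hxw, hsub', Or.inr ⟨le_of_lt hfa, ?_⟩⟩
            intro z hz hzb
            exact hzero z hz hzb
        · -- all leaves of the sub-branch vanish: contradiction with f a > 0
          push_neg at hstrict
          have hvan := vanishing hT hbd hint _ w a rfl haw.symm hxw ?_
          · linarith [hvan.1]
          · intro z hz hzb
            exact le_antisymm (hpos' z hz hzb) (hstrict z hz hzb)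

end MainInd

section Dist

variable {G : SimpleGraph V} {x u v w : V} {g : V → ℝ}

lemma exists_closer_nbr (hc : G.Connected) (hwx : w ≠ x) :
    ∃ y, G.Adj w y ∧ G.dist x y < G.dist x w := by
  obtain ⟨p, hp⟩ := hc.exists_walk_length_eq_dist x w
  set q := p.reverse with hq
  clear_value q
  have hql : q.length = G.dist x w := by rw [hq, SimpleGraph.Walk.length_reverse, hp]
  cases q with
  | nil => exact absurd rfl hwx
  | @cons _ y _ h q' =>
    refine ⟨y, h, ?_⟩
    have h1 : G.dist y x ≤ q'.length := SimpleGraph.dist_le q'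
    rw [SimpleGraph.Walk.length_cons] at hql
    rw [SimpleGraph.dist_comm] at h1
    omega

lemma flow_mono_pos (hc : G.Connected) (hgx : g x = 0)
    (hmono : ∀ y z, G.Adj y z → G.dist x z < G.dist x y → g z < g y) :
    ∀ w, w ≠ x → 0 < g w := by
  suffices h : ∀ n : ℕ, ∀ w, G.dist x w = n → w ≠ x → 0 < g w by
    intro w hw; exact h _ w rfl hw
  intro n
  induction n using Nat.strong_induction_on with
  | _ n IH =>
  intro w hdist hwx
  obtain ⟨y, hwy, hylt⟩ := exists_closer_nbr hc hwx
  have hgy : g y < g w := hmono w y hwy (by omega)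
  by_cases hyx : y = x
  · rw [hyx, hgx] at hgy; exact hgy
  · have := IH (G.dist x y) (by omega) y rfl hyx
    linarith

lemma dist_lt_of_not_mem_branch (hc : G.Connected) (hadj : G.Adj u v)
    (hx : x ∉ branchSet G u v) : G.dist x v < G.dist x u := by
  by_contra hcon
  push_neg at hcon
  obtain ⟨p, hp⟩ := hc.exists_walk_length_eq_dist x u
  by_cases he : s(u, v) ∈ p.edges
  · have hv : v ∈ p.support := p.snd_mem_support_of_mem_edges he
    have hspec := p.take_spec hv
    have hlen : (p.takeUntil v hv).length + (p.dropUntil v hv).length = p.length := by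
      rw [← SimpleGraph.Walk.length_append, hspec]
    have hd1 : G.dist x v ≤ (p.takeUntil v hv).length := SimpleGraph.dist_le _
    have hdrop : (p.dropUntil v hv).length = 0 := by omega
    have := SimpleGraph.Walk.eq_of_length_eq_zero hdrop
    exact G.ne_of_adj hadj this.symm
  · have hrev : ∀ e ∈ p.reverse.edges, e ∉ ({s(u, v)} : Set (Sym2 V)) := by
      intro e hee
      rw [SimpleGraph.Walk.edges_reverse, List.mem_reverse] at hee
      intro hmem
      rw [Set.mem_singleton_iff] at hmem
      exact he (hmem ▸ hee)
    exact hx ⟨p.reverse.toDeleteEdges _ hrev⟩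

end Dist

section LamPos

variable {G : SimpleGraph V} {x : V} {lam : ℝ} {f : V → ℝ}

lemma flow_lam_pos (hT : G.IsTree) (hlam : 0 ≤ lam) (hfne : f ≠ 0)
    (hbd : ∀ w ∈ bdry G, w ≠ x → lap G f w = lam * f w)
    (hint : ∀ w, w ∉ bdry G → w ≠ x → lap G f w = 0)
    (hcond : (∃ z ∈ bdry G, z ≠ x ∧ f z = 0) ∨
      ∃ z₁ ∈ bdry G, ∃ z₂ ∈ bdry G, z₁ ≠ x ∧ z₂ ≠ x ∧ f z₁ * f z₂ < 0) :
    0 < lam := by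
  rcases lt_or_eq_of_le hlam with h | h
  · exact h
  · exfalso
    -- lam = 0 : f is harmonic away from x, then everywhere, hence constant
    have hzero : ∀ w, w ≠ x → lap G f w = 0 := by
      intro w hwx
      by_cases hwb : w ∈ bdry G
      · rw [hbd w hwb hwx, ← h, zero_mul]
      · exact hint w hwb hwx
    have hlapx : lap G f x = 0 := by
      have hsum := sum_lap_univ (G := G) f
      have : ∑ w : V, lap G f w = lap G f x + ∑ w ∈ Finset.univ.erase x, lap G f w := by
        rw [← Finset.add_sum_erase _ _ (Finset.mem_univ x)]
      rw [this] at hsum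
      have hrest : ∑ w ∈ Finset.univ.erase x, lap G f w = 0 :=
        Finset.sum_eq_zero fun w hw => hzero w (Finset.ne_of_mem_erase hw)
      rw [hrest] at hsum
      linarith
    have hconst : ∀ w y : V, f w = f y := by
      refine harmonic_constant hT.isConnected ?_
      intro w
      by_cases hwx : w = x
      · rw [hwx]; exact hlapx
      · exact hzero w hwx
    rcases hcond with ⟨z, -, -, hz⟩ | ⟨z₁, -, z₂, -, -, -, hz⟩
    · exact hfne (funext fun w => (hconst w z).trans hz)
    · rw [hconst z₁ z₂] at hz
      exact absurd (mul_self_nonneg (f z₂)) (not_le.mpr hz)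

end LamPos

section Induce

variable {G : SimpleGraph V} {u v : V}

lemma degree_induce_eq (C : Set V) (t : C)
    (hcl : ∀ y, G.Adj t.1 y → y ∈ C) :
    (G.induce C).degree t = G.degree t.1 := by
  rw [← SimpleGraph.card_neighborSet_eq_degree, ← SimpleGraph.card_neighborSet_eq_degree]
  refine Fintype.card_congr ?_
  refine
    { toFun := fun a => ⟨a.1.1, a.2⟩
      invFun := fun b => ⟨⟨b.1, hcl b.1 b.2⟩, b.2⟩
      left_inv := fun a => Subtype.ext (Subtype.ext rfl)
      right_inv := fun b => Subtype.ext rfl }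

lemma bdry_induce_sub (hT : G.IsTree) (hadj : G.Adj u v)
    (t : branchClosed G u v)
    (htb : t ∈ bdry (G.induce (branchClosed G u v))) (htv : t.1 ≠ v) :
    t.1 ∈ branchSet G u v ∧ t.1 ∈ bdry G := by
  have htS : t.1 ∈ branchSet G u v := by
    rcases Set.mem_insert_iff.mp t.2 with h | h
    · exact absurd h htv
    · exact h
  have hcl : ∀ y, G.Adj t.1 y → y ∈ branchClosed G u v := by
    intro y hy
    by_cases hyS : y ∈ branchSet G u v
    · exact Set.mem_insert_of_mem _ hyS
    · obtain ⟨-, rfl⟩ := branch_cross hT hadj htS hyS hy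
      exact Set.mem_insert _ _
  refine ⟨htS, ?_⟩
  have hdeg : (G.induce (branchClosed G u v)).degree t = 1 := by
    have h' := htb
    simp only [bdry, Finset.mem_filter, Finset.mem_univ, true_and] at h'
    convert h'
  rw [degree_induce_eq _ t hcl] at hdeg
  simp [bdry, hdeg]

end Induce

section Green

variable {G : SimpleGraph V} {x u v : V} {lam mu : ℝ} {f g : V → ℝ}

lemma green_eq (hT : G.IsTree) (hadj : G.Adj u v) (hx : x ∉ branchSet G u v)
    (hfb : ∀ w ∈ bdry G, w ≠ x → lap G f w = lam * f w)
    (hfi : ∀ w, w ∉ bdry G → w ≠ x → lap G f w = 0)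
    (hgb : ∀ w ∈ bdry G, w ≠ x → lap G g w = mu * g w)
    (hgi : ∀ w, w ∉ bdry G → w ≠ x → lap G g w = 0) :
    (lam - mu) * (∑ w ∈ (Finset.univ.filter (· ∈ branchSet G u v)).filter (· ∈ bdry G),
        f w * g w)
      = lam * g v * (∑ w ∈ (Finset.univ.filter (· ∈ branchSet G u v)).filter (· ∈ bdry G),
          f w) - (g u - g v) * f v := by
  set S := Finset.univ.filter (· ∈ branchSet G u v) with hS
  set L := S.filter (· ∈ bdry G) with hL
  have hmem : ∀ w ∈ S, w ∈ branchSet G u v := by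
    intro w hw
    rw [hS, Finset.mem_filter] at hw
    exact hw.2
  have hwxS : ∀ w ∈ S, w ≠ x := fun w hw h => hx (h ▸ hmem w hw)
  have hraw := green_raw hT hadj f (fun y => g y - g v)
  have hraw2 : ∑ w ∈ S, ((g w - g v) * lap G f w - f w * lap G g w)
      = - ((g u - g v) * f v) := by
    rw [← hS] at hraw
    have h1 : ∑ w ∈ S, ((g w - g v) * lap G f w - f w * lap G g w)
        = ∑ w ∈ S, ((g w - g v) * lap G f w - f w * lap G (fun y => g y - g v) w) :=
      Finset.sum_congr rfl fun w _ => by rw [lap_sub_const]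
    rw [h1, hraw]
    ring
  have hsplit : ∑ w ∈ S, ((g w - g v) * lap G f w - f w * lap G g w)
      = ∑ w ∈ L, ((g w - g v) * lap G f w - f w * lap G g w) := by
    symm
    apply Finset.sum_subset (Finset.filter_subset _ _)
    intro w hwS hwL
    have hwb : w ∉ bdry G := fun hb => hwL (Finset.mem_filter.mpr ⟨hwS, hb⟩)
    rw [hfi w hwb (hwxS w hwS), hgi w hwb (hwxS w hwS), mul_zero, mul_zero, sub_zero]
  have hterm : ∀ w ∈ L, (g w - g v) * lap G f w - f w * lap G g w
      = (lam - mu) * (f w * g w) - lam * g v * f w := by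
    intro w hwL
    rw [hL, Finset.mem_filter] at hwL
    rw [hfb w hwL.2 (hwxS w hwL.1), hgb w hwL.2 (hwxS w hwL.1)]
    ring
  have hfinal : ∑ w ∈ L, ((lam - mu) * (f w * g w) - lam * g v * f w)
      = - ((g u - g v) * f v) := by
    rw [← Finset.sum_congr rfl hterm, ← hsplit, hraw2]
  rw [Finset.sum_sub_distrib, ← Finset.mul_sum, ← Finset.mul_sum] at hfinal
  linarith

end Green

/-- If a `lam`-flow `f` to the boundary vertex `x` vanishes at some boundary
vertex `≠ x`, or takes opposite signs at two boundary vertices `≠ x`, then there is an edge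
`(u,v)` whose branch `H` does not contain `x` such that on `G₁ = H(u,v)` either `f v ≤ 0` and
`f > 0` on `δG₁ ∖ {v}`, or `f v ≥ 0` and `f < 0` on `δG₁ ∖ {v}`; consequently `lam > σ(G,x)`. -/
theorem subtree_criterion (G : SimpleGraph V) (hG : G.IsTree)
    (x : V) (hx : x ∈ bdry G) (lam : ℝ) (hlam : 0 ≤ lam) (f : V → ℝ)
    (hf : IsFlow G lam x f)
    (hcond : (∃ z ∈ bdry G, z ≠ x ∧ f z = 0) ∨
      ∃ z₁ ∈ bdry G, ∃ z₂ ∈ bdry G, z₁ ≠ x ∧ z₂ ≠ x ∧ f z₁ * f z₂ < 0) :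
    (∃ u v : V, G.Adj u v ∧ x ∉ branchSet G u v ∧
      ((f v ≤ 0 ∧ ∀ t ∈ bdry (G.induce (branchClosed G u v)), t.1 ≠ v → 0 < f t.1) ∨
       (0 ≤ f v ∧ ∀ t ∈ bdry (G.induce (branchClosed G u v)), t.1 ≠ v → f t.1 < 0))) ∧
    sigma G x < lam := by
  obtain ⟨hfne, hfi, hfb⟩ := hf
  have hlam_pos : 0 < lam := flow_lam_pos hG hlam hfne hfb hfi hcond
  have hxdeg : G.degree x = 1 := by simpa [bdry] using hx
  obtain ⟨y₁, hy₁⟩ : ∃ y₁, G.neighborFinset x = {y₁} := Finset.card_eq_one.mp hxdeg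
  have hady : G.Adj x y₁ := by
    rw [← SimpleGraph.mem_neighborFinset, hy₁]
    exact Finset.mem_singleton_self y₁
  have hxtop : x ∉ branchSet G y₁ x :=
    fun h => branch_disjoint hG hady.symm h mem_branchSet_self
  have htop : branchSet G y₁ x = {w | w ≠ x} := branch_top hG hxdeg hady.symm
  have neg_hbd : ∀ w ∈ bdry G, w ≠ x → lap G (fun y => - f y) w = lam * (- f w) := by
    intro w hw hwx
    rw [lap_neg, hfb w hw hwx]
    ring
  have neg_hint : ∀ w, w ∉ bdry G → w ≠ x → lap G (fun y => - f y) w = 0 := by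
    intro w hw hwx
    rw [lap_neg, hfi w hw hwx, neg_zero]
  -- main branch construction
  have key : ∃ u v : V, G.Adj u v ∧ x ∉ branchSet G u v ∧
      ((f v ≤ 0 ∧ ∀ z ∈ branchSet G u v, z ∈ bdry G → 0 < f z) ∨
       (0 ≤ f v ∧ ∀ z ∈ branchSet G u v, z ∈ bdry G → f z < 0)) := by
    have convert_neg : (∃ u v : V, G.Adj u v ∧ x ∉ branchSet G u v ∧
        branchSet G u v ⊆ branchSet G y₁ x ∧
        (((fun y => - f y) v ≤ 0 ∧ ∀ z ∈ branchSet G u v, z ∈ bdry G → 0 < - f z) ∨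
         (0 ≤ (fun y => - f y) v ∧ ∀ z ∈ branchSet G u v, z ∈ bdry G → - f z < 0))) →
        ∃ u v : V, G.Adj u v ∧ x ∉ branchSet G u v ∧
        ((f v ≤ 0 ∧ ∀ z ∈ branchSet G u v, z ∈ bdry G → 0 < f z) ∨
         (0 ≤ f v ∧ ∀ z ∈ branchSet G u v, z ∈ bdry G → f z < 0)) := by
      rintro ⟨u, v, h1, h2, -, h4⟩
      refine ⟨u, v, h1, h2, ?_⟩
      rcases h4 with ⟨h5, h6⟩ | ⟨h5, h6⟩
      · have h5' : - f v ≤ 0 := h5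
        exact Or.inr ⟨by linarith, fun z hz hzb => by
          have h6' : (0:ℝ) < - f z := h6 z hz hzb; linarith⟩
      · have h5' : (0:ℝ) ≤ - f v := h5
        exact Or.inl ⟨by linarith, fun z hz hzb => by
          have h6' : - f z < (0:ℝ) := h6 z hz hzb; linarith⟩
    rcases hcond with ⟨z₀, hz₀b, hz₀x, hz₀0⟩ | ⟨z₁, hz₁b, z₂, hz₂b, hz₁x, hz₂x, hzz⟩
    · by_cases hnz : ∃ z ∈ bdry G, z ≠ x ∧ f z ≠ 0
      · obtain ⟨zs, hzsb, hzsx, hzsne⟩ := hnz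
        have hzsm : zs ∈ branchSet G y₁ x := by rw [htop]; exact hzsx
        have hz₀m : z₀ ∈ branchSet G y₁ x := by rw [htop]; exact hz₀x
        rcases lt_or_gt_of_ne hzsne with hneg | hpos
        · refine convert_neg ?_
          exact flow_sign_branch hG x _ (fun y => - f y) lam neg_hbd neg_hint y₁ x rfl
            hady.symm hxtop ⟨zs, hzsm, hzsb, by show (0:ℝ) < - f zs; linarith⟩
            ⟨z₀, hz₀m, hz₀b, by show - f z₀ ≤ (0:ℝ); linarith⟩
        · obtain ⟨u, v, h1, h2, -, h4⟩ := flow_sign_branch hG x _ f lam hfb hfi y₁ x rfl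
            hady.symm hxtop ⟨zs, hzsm, hzsb, hpos⟩ ⟨z₀, hz₀m, hz₀b, le_of_eq hz₀0⟩
          exact ⟨u, v, h1, h2, h4⟩
      · push_neg at hnz
        exfalso
        have hvan := vanishing hG hfb hfi _ y₁ x rfl hady.symm hxtop
          (fun z hzm hzb => hnz z hzb (by rw [htop] at hzm; exact hzm))
        refine hfne (funext fun w => ?_)
        by_cases hwx : w = x
        · rw [hwx]; exact hvan.1
        · exact hvan.2 w (by rw [htop]; exact hwx)
    · have hz₁m : z₁ ∈ branchSet G y₁ x := by rw [htop]; exact hz₁x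
      have hz₂m : z₂ ∈ branchSet G y₁ x := by rw [htop]; exact hz₂x
      rcases mul_neg_iff.mp hzz with ⟨h1p, h2n⟩ | ⟨h1n, h2p⟩
      · obtain ⟨u, v, h1, h2, -, h4⟩ := flow_sign_branch hG x _ f lam hfb hfi y₁ x rfl
          hady.symm hxtop ⟨z₁, hz₁m, hz₁b, h1p⟩ ⟨z₂, hz₂m, hz₂b, le_of_lt h2n⟩
        exact ⟨u, v, h1, h2, h4⟩
      · obtain ⟨u, v, h1, h2, -, h4⟩ := flow_sign_branch hG x _ f lam hfb hfi y₁ x rfl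
          hady.symm hxtop ⟨z₂, hz₂m, hz₂b, h2p⟩ ⟨z₁, hz₁m, hz₁b, le_of_lt h1n⟩
        exact ⟨u, v, h1, h2, h4⟩
  obtain ⟨u, v, huv, hxuv, hgood⟩ := key
  have hvx : v ≠ x := by
    intro hveq
    rw [hveq] at hgood huv
    have hbrx : branchSet G u x = {w | w ≠ x} := branch_top hG hxdeg huv
    rcases hcond with ⟨z, hzb, hzx, hz0⟩ | ⟨z₁, hz₁b, z₂, hz₂b, hz₁x, hz₂x, hzz⟩
    · rcases hgood with ⟨-, hpos⟩ | ⟨-, hneg⟩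
      · have := hpos z (by rw [hbrx]; exact hzx) hzb; linarith
      · have := hneg z (by rw [hbrx]; exact hzx) hzb; linarith
    · rcases hgood with ⟨-, hpos⟩ | ⟨-, hneg⟩
      · have h1 := hpos z₁ (by rw [hbrx]; exact hz₁x) hz₁b
        have h2 := hpos z₂ (by rw [hbrx]; exact hz₂x) hz₂b
        nlinarith
      · have h1 := hneg z₁ (by rw [hbrx]; exact hz₁x) hz₁b
        have h2 := hneg z₂ (by rw [hbrx]; exact hz₂x) hz₂b
        nlinarith
  constructor
  · refine ⟨u, v, huv, hxuv, ?_⟩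
    rcases hgood with ⟨hfv, hpos⟩ | ⟨hfv, hneg⟩
    · refine Or.inl ⟨hfv, fun t ht htv => ?_⟩
      obtain ⟨hts, htb⟩ := bdry_induce_sub hG huv t ht htv
      exact hpos t.1 hts htb
    · refine Or.inr ⟨hfv, fun t ht htv => ?_⟩
      obtain ⟨hts, htb⟩ := bdry_induce_sub hG huv t ht htv
      exact hneg t.1 hts htb
  · by_cases hne : (SigmaSet G x).Nonempty
    · obtain ⟨mu, hmu⟩ := hne
      have hsig : sigma G x ≤ mu := csInf_le ⟨0, fun t ht => ht.1⟩ hmu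
      obtain ⟨hmu0, g, ⟨hgne, hgi, hgb⟩, hgx, hmono⟩ := hmu
      have hgreen := green_eq (lam := lam) (mu := mu) (f := f) (g := g)
        hG huv hxuv hfb hfi hgb hgi
      set L := (Finset.univ.filter (· ∈ branchSet G u v)).filter (· ∈ bdry G) with hLdef
      have hmemL : ∀ w ∈ L, w ∈ branchSet G u v ∧ w ∈ bdry G := by
        intro w hw
        rw [hLdef, Finset.mem_filter, Finset.mem_filter] at hw
        exact ⟨hw.1.2, hw.2⟩
      have hLne : L.Nonempty := by
        obtain ⟨z, hzm, hzb⟩ := branch_leaf_exists hG _ u v rfl huv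
        exact ⟨z, by
          rw [hLdef, Finset.mem_filter, Finset.mem_filter]
          exact ⟨⟨Finset.mem_univ z, hzm⟩, hzb⟩⟩
      have hgpos : ∀ w ∈ L, 0 < g w := by
        intro w hw
        refine flow_mono_pos hG.isConnected hgx hmono w ?_
        exact fun h => hxuv (h ▸ (hmemL w hw).1)
      have hgv : 0 < g v := flow_mono_pos hG.isConnected hgx hmono v hvx
      have hguv : g v < g u :=
        hmono u v huv (dist_lt_of_not_mem_branch hG.isConnected huv hxuv)
      have hmulam : mu < lam := by
        by_contra hcon
        push_neg at hcon
        rcases hgood with ⟨hfv, hpos⟩ | ⟨hfv, hneg⟩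
        · have hA : 0 < ∑ w ∈ L, f w * g w :=
            Finset.sum_pos (fun w hw =>
              mul_pos (hpos w (hmemL w hw).1 (hmemL w hw).2) (hgpos w hw)) hLne
          have hB : 0 < ∑ w ∈ L, f w :=
            Finset.sum_pos (fun w hw => hpos w (hmemL w hw).1 (hmemL w hw).2) hLne
          have h1 : 0 < lam * g v * (∑ w ∈ L, f w) :=
            mul_pos (mul_pos hlam_pos hgv) hB
          have h2 : (g u - g v) * f v ≤ 0 :=
            mul_nonpos_of_nonneg_of_nonpos (by linarith) hfv
          have h3 : (lam - mu) * (∑ w ∈ L, f w * g w) ≤ 0 :=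
            mul_nonpos_of_nonpos_of_nonneg (by linarith) (le_of_lt hA)
          linarith
        · have hA : (∑ w ∈ L, f w * g w) < 0 := by
            have := Finset.sum_pos (fun w hw =>
              mul_pos (neg_pos.mpr (hneg w (hmemL w hw).1 (hmemL w hw).2))
                (hgpos w hw)) hLne
            have heq : ∑ w ∈ L, (- f w) * g w = - ∑ w ∈ L, f w * g w := by
              rw [← Finset.sum_neg_distrib]
              exact Finset.sum_congr rfl fun w _ => by ring
            rw [heq] at this
            linarith
          have hB : (∑ w ∈ L, f w) < 0 := by
            have := Finset.sum_pos (fun w hw =>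
              neg_pos.mpr (hneg w (hmemL w hw).1 (hmemL w hw).2)) hLne
            rw [Finset.sum_neg_distrib] at this
            linarith
          have h1 : lam * g v * (∑ w ∈ L, f w) < 0 :=
            mul_neg_of_pos_of_neg (mul_pos hlam_pos hgv) hB
          have h2 : 0 ≤ (g u - g v) * f v :=
            mul_nonneg (by linarith) hfv
          have h3 : 0 ≤ (lam - mu) * (∑ w ∈ L, f w * g w) := by nlinarith
          linarith
      exact lt_of_le_of_lt hsig hmulam
    · have hemp : SigmaSet G x = ∅ := Set.not_nonempty_iff_eq_empty.mp hne
      rw [sigma, hemp, Real.sInf_empty]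
      exact hlam_pos
end Steklov
end

section
/- For every finite tree G with boundary δG containing x, one has σ(G,x)=σ̂(G,x). -/
open Finset

attribute [local instance] Classical.propDecidable

namespace Steklov

variable {V : Type} [Fintype V] [DecidableEq V]

section Aux
set_option linter.unusedSectionVars false
set_option maxHeartbeats 1000000


lemma tree_path_length {G : SimpleGraph V} (hG : G.IsTree) {u v : V} {p : G.Walk u v}
    (hp : p.IsPath) : p.length = G.dist u v := by
  obtain ⟨q, hq, hql⟩ := hG.isConnected.exists_path_of_dist u v
  have h := hG.IsAcyclic.path_unique ⟨p, hp⟩ ⟨q, hq⟩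
  rw [← hql]
  exact congrArg SimpleGraph.Walk.length (congrArg Subtype.val h)

lemma dist_lt_of_mem_support {G : SimpleGraph V} (hG : G.IsTree) {u v b : V} {p : G.Walk u v}
    (hp : p.IsPath) (hb : b ∈ p.support) (hbv : b ≠ v) : G.dist u b < p.length := by
  have h1 : (p.takeUntil b hb).length = G.dist u b := tree_path_length hG (hp.takeUntil hb)
  have h2 := p.take_spec hb
  have h3 : p.length = (p.takeUntil b hb).length + (p.dropUntil b hb).length := by
    conv_lhs => rw [← h2]
    rw [SimpleGraph.Walk.length_append]
  have h4 : (p.dropUntil b hb).length ≠ 0 := by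
    intro h0
    exact hbv (SimpleGraph.Walk.eq_of_length_eq_zero h0)
  omega

lemma isPath_concat {G : SimpleGraph V} {u v w : V} {p : G.Walk u v} (hp : p.IsPath)
    (h : G.Adj v w) (hw : w ∉ p.support) : (p.concat h).IsPath := by
  rw [← SimpleGraph.Walk.isPath_reverse_iff, SimpleGraph.Walk.reverse_concat]
  exact (hp.reverse).cons (by simpa [SimpleGraph.Walk.support_reverse] using hw)

lemma adj_dist_ne {G : SimpleGraph V} (hG : G.IsTree) {x a b : V} (hab : G.Adj a b) :
    G.dist x a ≠ G.dist x b := by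
  intro hd
  obtain ⟨p, hp, hpl⟩ := hG.isConnected.exists_path_of_dist x a
  have hbp : b ∉ p.support := by
    intro hb
    rcases eq_or_ne b a with rfl | hba
    · exact hab.ne rfl
    · have := dist_lt_of_mem_support hG hp hb hba
      omega
  have hpath : (p.concat hab).IsPath := isPath_concat hp hab hbp
  have h2 : (p.concat hab).length = G.dist x b := tree_path_length hG hpath
  rw [SimpleGraph.Walk.length_concat] at h2
  omega

lemma adj_dist_cases {G : SimpleGraph V} (hG : G.IsTree) {x a b : V} (hab : G.Adj a b) :
    G.dist x b = G.dist x a + 1 ∨ G.dist x a = G.dist x b + 1 := by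
  have h1 : G.dist x b ≤ G.dist x a + 1 := by
    have := hG.isConnected.dist_triangle (u := x) (v := a) (w := b)
    rwa [SimpleGraph.dist_eq_one_iff_adj.mpr hab] at this
  have h2 : G.dist x a ≤ G.dist x b + 1 := by
    have := hG.isConnected.dist_triangle (u := x) (v := b) (w := a)
    rwa [SimpleGraph.dist_eq_one_iff_adj.mpr hab.symm] at this
  have h3 := adj_dist_ne hG (x := x) hab
  omega

lemma exists_parent {G : SimpleGraph V} (hG : G.IsTree) {x v : V} (h : G.dist x v ≠ 0) :
    ∃ u, G.Adj v u ∧ G.dist x u + 1 = G.dist x v := by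
  obtain ⟨p, hp, hpl⟩ := hG.isConnected.exists_path_of_dist x v
  cases hr : p.reverse with
  | nil =>
    exfalso
    have : p.length = 0 := by
      have := congrArg SimpleGraph.Walk.length hr
      simpa [SimpleGraph.Walk.length_reverse] using this
    omega
  | cons hadj q =>
    rename_i u
    refine ⟨u, hadj, ?_⟩
    have hlen : q.length + 1 = p.length := by
      have := congrArg SimpleGraph.Walk.length hr
      simpa [SimpleGraph.Walk.length_reverse] using this.symm
    have hd1 : G.dist x u ≤ q.length := by
      have := SimpleGraph.dist_le q
      rwa [SimpleGraph.dist_comm] at this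
    have hd2 : G.dist x v ≤ G.dist x u + 1 := by
      have ht := hG.isConnected.dist_triangle (u := x) (v := u) (w := v)
      rwa [SimpleGraph.dist_eq_one_iff_adj.mpr hadj.symm] at ht
    omega

lemma parent_unique {G : SimpleGraph V} (hG : G.IsTree) {x v u w : V} (hu : G.Adj v u)
    (hw : G.Adj v w) (hud : G.dist x u + 1 = G.dist x v) (hwd : G.dist x w + 1 = G.dist x v) :
    u = w := by
  obtain ⟨p, hp, hpl⟩ := hG.isConnected.exists_path_of_dist x u
  obtain ⟨q, hq, hql⟩ := hG.isConnected.exists_path_of_dist x w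
  have hvp : v ∉ p.support := by
    intro hv
    rcases eq_or_ne v u with rfl | hne
    · exact hu.ne rfl
    · have := dist_lt_of_mem_support hG hp hv hne; omega
  have hvq : v ∉ q.support := by
    intro hv
    rcases eq_or_ne v w with rfl | hne
    · exact hw.ne rfl
    · have := dist_lt_of_mem_support hG hq hv hne; omega
  have P1 : (p.concat hu.symm).IsPath := isPath_concat hp hu.symm hvp
  have P2 : (q.concat hw.symm).IsPath := isPath_concat hq hw.symm hvq
  have huniq := hG.IsAcyclic.path_unique ⟨p.concat hu.symm, P1⟩ ⟨q.concat hw.symm, P2⟩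
  have heq : p.concat hu.symm = q.concat hw.symm := congrArg Subtype.val huniq
  obtain ⟨hv, -⟩ := SimpleGraph.Walk.concat_inj heq
  exact hv

section Par
variable {G : SimpleGraph V}

noncomputable def par (G : SimpleGraph V) (hG : G.IsTree) (x v : V) : V :=
  if h : G.dist x v ≠ 0 then (exists_parent hG h).choose else v

lemma par_adj (hG : G.IsTree) {x v : V} (h : G.dist x v ≠ 0) :
    G.Adj v (par G hG x v) := by
  rw [par, dif_pos h]
  exact (exists_parent hG h).choose_spec.1

lemma par_dist (hG : G.IsTree) {x v : V} (h : G.dist x v ≠ 0) :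
    G.dist x (par G hG x v) + 1 = G.dist x v := by
  rw [par, dif_pos h]
  exact (exists_parent hG h).choose_spec.2

lemma par_eq (hG : G.IsTree) {x v u : V} (hadj : G.Adj v u)
    (hd : G.dist x u + 1 = G.dist x v) : par G hG x v = u := by
  have h : G.dist x v ≠ 0 := by omega
  exact parent_unique hG (par_adj hG h) hadj (par_dist hG h) hd

noncomputable def gaux (G : SimpleGraph V) (hG : G.IsTree) (x : V) (f : V → ℝ) :
    ℕ → V → ℝ
  | 0, _ => 0
  | n+1, v => gaux G hG x f n (par G hG x v) + |f v - f (par G hG x v)|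

/-- The monotone rearrangement of `f` along the tree rooted at `x`. -/
noncomputable def gfun (G : SimpleGraph V) (hG : G.IsTree) (x : V) (f : V → ℝ) (v : V) : ℝ :=
  gaux G hG x f (G.dist x v) v

lemma gfun_eq_zero_of_dist (hG : G.IsTree) {x v : V} (f : V → ℝ) (h : G.dist x v = 0) :
    gfun G hG x f v = 0 := by
  rw [gfun, h]; rfl

lemma gfun_x (hG : G.IsTree) (x : V) (f : V → ℝ) : gfun G hG x f x = 0 :=
  gfun_eq_zero_of_dist hG f (SimpleGraph.dist_self)

lemma gfun_step (hG : G.IsTree) {x v : V} (f : V → ℝ) (h : G.dist x v ≠ 0) :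
    gfun G hG x f v = gfun G hG x f (par G hG x v) + |f v - f (par G hG x v)| := by
  obtain ⟨n, hn⟩ : ∃ n, G.dist x v = n + 1 := ⟨G.dist x v - 1, by omega⟩
  have hp : G.dist x (par G hG x v) = n := by have := par_dist hG h; omega
  rw [gfun, gfun, hn, hp]
  rfl

lemma gfun_nonneg (hG : G.IsTree) (x : V) (f : V → ℝ) (v : V) : 0 ≤ gfun G hG x f v := by
  obtain ⟨n, hn⟩ : ∃ n, G.dist x v = n := ⟨_, rfl⟩
  induction n generalizing v with
  | zero => rw [gfun_eq_zero_of_dist hG f hn]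
  | succ n ih =>
    rw [gfun_step hG f (by omega)]
    have hp : G.dist x (par G hG x v) = n := by have := par_dist hG (by omega : G.dist x v ≠ 0); omega
    have := ih _ hp
    positivity

lemma abs_le_gfun (hG : G.IsTree) {x : V} {f : V → ℝ} (hfx : f x = 0) (v : V) :
    |f v| ≤ gfun G hG x f v := by
  obtain ⟨n, hn⟩ : ∃ n, G.dist x v = n := ⟨_, rfl⟩
  induction n generalizing v with
  | zero =>
    have hv : x = v := (hG.isConnected.dist_eq_zero_iff).mp hn
    rw [gfun_eq_zero_of_dist hG f hn, ← hv, hfx]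
    simp
  | succ n ih =>
    rw [gfun_step hG f (by omega)]
    have hp : G.dist x (par G hG x v) = n := by
      have := par_dist hG (by omega : G.dist x v ≠ 0); omega
    have h1 := ih _ hp
    have h3 : |f v| ≤ |f (par G hG x v)| + |f v - f (par G hG x v)| := by
      have := abs_sub_abs_le_abs_sub (f v) (f (par G hG x v))
      linarith
    linarith

lemma gfun_edge (hG : G.IsTree) {x u v : V} (f : V → ℝ) (hadj : G.Adj u v)
    (hd : G.dist x v + 1 = G.dist x u) :
    gfun G hG x f u = gfun G hG x f v + |f u - f v| := by
  have hp : par G hG x u = v := par_eq hG hadj hd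
  rw [gfun_step hG f (by omega), hp]

lemma gfun_mono (hG : G.IsTree) {x u v : V} (f : V → ℝ) (hadj : G.Adj u v)
    (hd : G.dist x v + 1 = G.dist x u) :
    gfun G hG x f v ≤ gfun G hG x f u := by
  rw [gfun_edge hG f hadj hd]
  have := abs_nonneg (f u - f v)
  linarith

end Par


noncomputable def Dform (G : SimpleGraph V) (f : V → ℝ) : ℝ :=
  ∑ u, ∑ v ∈ G.neighborFinset u, (f u - f v) ^ 2

noncomputable def Lform (G : SimpleGraph V) (f h : V → ℝ) : ℝ :=
  ∑ u, ∑ v ∈ G.neighborFinset u, (f u - f v) * (h u - h v)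

noncomputable def Bform (G : SimpleGraph V) (x : V) (f : V → ℝ) : ℝ :=
  ∑ w ∈ (bdry G).erase x, f w ^ 2

noncomputable def BLform (G : SimpleGraph V) (x : V) (f h : V → ℝ) : ℝ :=
  ∑ w ∈ (bdry G).erase x, f w * h w

lemma sum_nbr_comm (G : SimpleGraph V) (F : V → V → ℝ) :
    ∑ u, ∑ v ∈ G.neighborFinset u, F u v = ∑ u, ∑ v ∈ G.neighborFinset u, F v u := by
  have h : ∀ (F : V → V → ℝ) (u : V),
      ∑ v ∈ G.neighborFinset u, F u v = ∑ v, if G.Adj u v then F u v else 0 := by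
    intro F u
    rw [SimpleGraph.neighborFinset_eq_filter, Finset.sum_filter]
  rw [Finset.sum_congr rfl (fun u _ => h F u),
      Finset.sum_congr rfl (fun u _ => h (fun a b => F b a) u), Finset.sum_comm]
  refine Finset.sum_congr rfl fun v _ => Finset.sum_congr rfl fun u _ => ?_
  by_cases hadj : G.Adj u v
  · rw [if_pos hadj, if_pos (hadj.symm)]
  · rw [if_neg hadj, if_neg (fun hs => hadj hs.symm)]

lemma Dform_nonneg (G : SimpleGraph V) (f : V → ℝ) : 0 ≤ Dform G f :=
  Finset.sum_nonneg fun u _ => Finset.sum_nonneg fun v _ => sq_nonneg _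

lemma Bform_nonneg (G : SimpleGraph V) (x : V) (f : V → ℝ) : 0 ≤ Bform G x f :=
  Finset.sum_nonneg fun w _ => sq_nonneg _

lemma Dform_smul (G : SimpleGraph V) (f : V → ℝ) (t : ℝ) :
    Dform G (t • f) = t ^ 2 * Dform G f := by
  simp only [Dform, Pi.smul_apply, smul_eq_mul, Finset.mul_sum]
  refine Finset.sum_congr rfl fun u _ => Finset.sum_congr rfl fun v _ => by ring

lemma Bform_smul (G : SimpleGraph V) (x : V) (f : V → ℝ) (t : ℝ) :
    Bform G x (t • f) = t ^ 2 * Bform G x f := by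
  simp only [Bform, Pi.smul_apply, smul_eq_mul, Finset.mul_sum]
  exact Finset.sum_congr rfl fun w _ => by ring

lemma Dform_eq_lap (G : SimpleGraph V) (f : V → ℝ) :
    Dform G f = 2 * ∑ v, f v * lap G f v := by
  have h1 : ∑ u, ∑ v ∈ G.neighborFinset u, f u * (f u - f v) = ∑ v, f v * lap G f v :=
    Finset.sum_congr rfl fun u _ => by rw [lap, Finset.mul_sum]
  have h2 : ∑ u, ∑ v ∈ G.neighborFinset u, f v * (f u - f v) = - ∑ v, f v * lap G f v := by
    rw [sum_nbr_comm G (fun u v => f v * (f u - f v)), ← Finset.sum_neg_distrib]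
    refine Finset.sum_congr rfl fun u _ => ?_
    rw [lap, Finset.mul_sum, ← Finset.sum_neg_distrib]
    exact Finset.sum_congr rfl fun v _ => by ring
  have h3 : Dform G f = ∑ u, ∑ v ∈ G.neighborFinset u,
      (f u * (f u - f v) - f v * (f u - f v)) := by
    refine Finset.sum_congr rfl fun u _ => Finset.sum_congr rfl fun v _ => by ring
  rw [h3]
  simp only [Finset.sum_sub_distrib]
  rw [h1, h2]
  ring

lemma Dform_add_smul (G : SimpleGraph V) (f h : V → ℝ) (t : ℝ) :
    Dform G (f + t • h) = Dform G f + 2 * t * Lform G f h + t ^ 2 * Dform G h := by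
  have key : ∀ u, ∑ v ∈ G.neighborFinset u, ((f + t • h) u - (f + t • h) v) ^ 2 =
      (∑ v ∈ G.neighborFinset u, (f u - f v) ^ 2) +
      (2 * t * ∑ v ∈ G.neighborFinset u, (f u - f v) * (h u - h v)) +
      (t ^ 2 * ∑ v ∈ G.neighborFinset u, (h u - h v) ^ 2) := by
    intro u
    rw [Finset.mul_sum, Finset.mul_sum, ← Finset.sum_add_distrib, ← Finset.sum_add_distrib]
    refine Finset.sum_congr rfl fun v _ => ?_
    simp only [Pi.add_apply, Pi.smul_apply, smul_eq_mul]
    ring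
  rw [Dform, Finset.sum_congr rfl (fun u _ => key u)]
  rw [Finset.sum_add_distrib, Finset.sum_add_distrib, ← Finset.mul_sum, ← Finset.mul_sum]
  rfl

lemma Bform_add_smul (G : SimpleGraph V) (x : V) (f h : V → ℝ) (t : ℝ) :
    Bform G x (f + t • h) = Bform G x f + 2 * t * BLform G x f h + t ^ 2 * Bform G x h := by
  rw [Bform, Bform, BLform, Bform, Finset.mul_sum, Finset.mul_sum, ← Finset.sum_add_distrib,
    ← Finset.sum_add_distrib]
  refine Finset.sum_congr rfl fun w _ => ?_
  simp only [Pi.add_apply, Pi.smul_apply, smul_eq_mul]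
  ring

noncomputable def ind (v : V) : V → ℝ := fun w => if w = v then 1 else 0

lemma Lform_ind (G : SimpleGraph V) (f : V → ℝ) (v : V) :
    Lform G f (ind v) = 2 * lap G f v := by
  have h1 : ∑ u, ∑ w ∈ G.neighborFinset u, (f u - f w) * ind v u
      = ∑ u, ind v u * lap G f u := by
    refine Finset.sum_congr rfl fun u _ => ?_
    rw [lap, Finset.mul_sum]
    exact Finset.sum_congr rfl fun w _ => by ring
  have h2 : ∑ u, ∑ w ∈ G.neighborFinset u, (f u - f w) * ind v w
      = - ∑ u, ind v u * lap G f u := by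
    rw [sum_nbr_comm G (fun u w => (f u - f w) * ind v w), ← Finset.sum_neg_distrib]
    refine Finset.sum_congr rfl fun u _ => ?_
    rw [lap, Finset.mul_sum, ← Finset.sum_neg_distrib]
    exact Finset.sum_congr rfl fun w _ => by ring
  have h3 : Lform G f (ind v) = (∑ u, ∑ w ∈ G.neighborFinset u, (f u - f w) * ind v u)
      - ∑ u, ∑ w ∈ G.neighborFinset u, (f u - f w) * ind v w := by
    rw [← Finset.sum_sub_distrib]
    refine Finset.sum_congr rfl fun u _ => ?_
    rw [← Finset.sum_sub_distrib]
    exact Finset.sum_congr rfl fun w _ => by ring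
  have h4 : ∑ u, ind v u * lap G f u = lap G f v := by
    rw [Finset.sum_eq_single v]
    · simp [ind]
    · intro b _ hb; simp [ind, hb]
    · intro hv; exact absurd (Finset.mem_univ v) hv
  rw [h3, h1, h2, h4]
  ring

lemma BLform_ind (G : SimpleGraph V) (x : V) (f : V → ℝ) (v : V) :
    BLform G x f (ind v) = if v ∈ (bdry G).erase x then f v else 0 := by
  rw [BLform]
  by_cases hv : v ∈ (bdry G).erase x
  · rw [if_pos hv, Finset.sum_eq_single v]
    · simp [ind]
    · intro b _ hb; simp [ind, hb]
    · intro h; exact absurd hv h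
  · rw [if_neg hv]
    refine Finset.sum_eq_zero fun w hw => ?_
    have : w ≠ v := fun h => hv (h ▸ hw)
    simp [ind, this]


lemma continuous_Dform (G : SimpleGraph V) : Continuous (fun f : V → ℝ => Dform G f) := by
  unfold Dform
  refine continuous_finset_sum _ fun u _ => continuous_finset_sum _ fun v _ => ?_
  exact ((continuous_apply u).sub (continuous_apply v)).pow 2

lemma continuous_Bform (G : SimpleGraph V) (x : V) :
    Continuous (fun f : V → ℝ => Bform G x f) := by
  unfold Bform
  exact continuous_finset_sum _ fun w _ => (continuous_apply w).pow 2

lemma continuous_sumsq : Continuous (fun f : V → ℝ => ∑ v, f v ^ 2) :=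
  continuous_finset_sum _ fun v _ => (continuous_apply v).pow 2

lemma sumsq_eq_zero {f : V → ℝ} (h : ∑ v, f v ^ 2 = 0) : ∀ v, f v = 0 := by
  intro v
  have h1 := (Finset.sum_eq_zero_iff_of_nonneg (fun w _ => sq_nonneg (f w))).mp h v (Finset.mem_univ v)
  exact pow_eq_zero_iff two_ne_zero |>.mp h1

lemma spectral_gap (G : SimpleGraph V) (hconn : G.Connected) (x y : V) (hyx : y ≠ x) :
    ∃ c : ℝ, 0 < c ∧ ∀ f : V → ℝ, f x = 0 → c * (∑ v, f v ^ 2) ≤ Dform G f := by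
  set S : Set (V → ℝ) := {f | f x = 0 ∧ ∑ v, f v ^ 2 = 1} with hS
  have hclosed : IsClosed S := by
    apply IsClosed.inter
    · exact isClosed_eq (continuous_apply x) continuous_const
    · exact isClosed_eq continuous_sumsq continuous_const
  have hbdd : Bornology.IsBounded S := by
    refine (Metric.isBounded_closedBall (x := (0 : V → ℝ)) (r := 1)).subset fun f hf => ?_
    rw [Metric.mem_closedBall, dist_zero_right]
    rw [pi_norm_le_iff_of_nonneg zero_le_one]
    intro i
    rw [Real.norm_eq_abs]
    have h1 : f i ^ 2 ≤ 1 := by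
      rw [← hf.2]
      exact Finset.single_le_sum (fun v (_ : v ∈ Finset.univ) => sq_nonneg (f v)) (Finset.mem_univ i)
    nlinarith [abs_nonneg (f i), sq_abs (f i)]
  have hcpt : IsCompact S := Metric.isCompact_of_isClosed_isBounded hclosed hbdd
  have hne : S.Nonempty := by
    refine ⟨ind y, ?_, ?_⟩
    · simp only [ind]
      rw [if_neg hyx.symm]
    · show ∑ v, ind y v ^ 2 = 1
      rw [Finset.sum_eq_single y]
      · simp [ind]
      · intro b _ hb; simp [ind, hb]
      · intro hy; exact absurd (Finset.mem_univ y) hy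
  obtain ⟨f0, hf0S, hmin⟩ := hcpt.exists_isMinOn hne (continuous_Dform G).continuousOn
  refine ⟨Dform G f0, ?_, ?_⟩
  · rcases lt_or_eq_of_le (Dform_nonneg G f0) with h | h
    · exact h
    · exfalso
      have hedge : ∀ u v : V, G.Adj u v → f0 u = f0 v := by
        intro u v hadj
        have h1 := (Finset.sum_eq_zero_iff_of_nonneg
          (fun w (_ : w ∈ (Finset.univ : Finset V)) =>
            Finset.sum_nonneg fun z _ => sq_nonneg (f0 w - f0 z))).mp h.symm u (Finset.mem_univ u)
        have h2 := (Finset.sum_eq_zero_iff_of_nonneg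
          (fun z _ => sq_nonneg (f0 u - f0 z))).mp h1 v ((SimpleGraph.mem_neighborFinset G u v).mpr hadj)
        have h3 := pow_eq_zero_iff two_ne_zero |>.mp h2
        linarith [sub_eq_zero.mp h3]
      have hzero : ∀ v, f0 v = 0 := by
        have key : ∀ (u v : V) (p : G.Walk u v), f0 u = 0 → f0 v = 0 := by
          intro u v p
          induction p with
          | nil => exact fun h => h
          | cons hadj q ih =>
            intro h0
            apply ih
            rw [← hedge _ _ hadj, h0]
        intro v
        obtain ⟨p⟩ := hconn x v
        exact key x v p hf0S.1
      have : (1 : ℝ) = 0 := by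
        rw [← hf0S.2]
        exact Finset.sum_eq_zero fun v _ => by rw [hzero v]; ring
      norm_num at this
  · intro f hfx
    by_cases hs : ∑ v, f v ^ 2 = 0
    · rw [hs, mul_zero]
      exact Dform_nonneg G f
    · have hspos : 0 < ∑ v, f v ^ 2 := by
        rcases lt_or_eq_of_le (Finset.sum_nonneg fun v _ => sq_nonneg (f v)) with h | h
        · exact h
        · exact absurd h.symm hs
      set s : ℝ := (Real.sqrt (∑ v, f v ^ 2))⁻¹ with hsdef
      have hsqrtpos : 0 < Real.sqrt (∑ v, f v ^ 2) := Real.sqrt_pos.mpr hspos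
      have hs2 : s ^ 2 = (∑ v, f v ^ 2)⁻¹ := by
        rw [hsdef, ← Real.sqrt_inv, Real.sq_sqrt (by positivity)]
      have hmem : s • f ∈ S := by
        constructor
        · simp [Pi.smul_apply, hfx]
        · show ∑ v, (s • f) v ^ 2 = 1
          have : ∑ v, (s • f) v ^ 2 = s ^ 2 * ∑ v, f v ^ 2 := by
            rw [Finset.mul_sum]
            exact Finset.sum_congr rfl fun v _ => by simp [Pi.smul_apply]; ring
          rw [this, hs2, inv_mul_cancel₀ hs]
      have hle := hmin hmem
      have : Dform G f0 ≤ s ^ 2 * Dform G f := by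
        rw [← Dform_smul]; exact hle
      rw [hs2] at this
      calc Dform G f0 * (∑ v, f v ^ 2) ≤ ((∑ v, f v ^ 2)⁻¹ * Dform G f) * (∑ v, f v ^ 2) := by
            apply mul_le_mul_of_nonneg_right this (le_of_lt hspos)
        _ = Dform G f := by field_simp

lemma exists_maximizer (G : SimpleGraph V) (hconn : G.Connected) (x w : V)
    (hw : w ∈ (bdry G).erase x) :
    ∃ m : ℝ, 0 < m ∧ (∀ g : V → ℝ, g x = 0 → Bform G x g ≤ m * Dform G g) ∧
      ∃ f : V → ℝ, f x = 0 ∧ Dform G f = 1 ∧ Bform G x f = m := by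
  have hwx : w ≠ x := (Finset.mem_erase.mp hw).1
  obtain ⟨c, hc, hgap⟩ := spectral_gap G hconn x w hwx
  set K : Set (V → ℝ) := {f | f x = 0 ∧ Dform G f ≤ 1} with hK
  have hclosed : IsClosed K :=
    (isClosed_eq (continuous_apply x) continuous_const).inter
      (isClosed_le (continuous_Dform G) continuous_const)
  have hbdd : Bornology.IsBounded K := by
    refine (Metric.isBounded_closedBall (x := (0 : V → ℝ))
      (r := Real.sqrt (1 / c))).subset fun f hf => ?_
    rw [Metric.mem_closedBall, dist_zero_right,
      pi_norm_le_iff_of_nonneg (Real.sqrt_nonneg _)]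
    intro i
    rw [Real.norm_eq_abs, ← Real.sqrt_sq_eq_abs]
    apply Real.sqrt_le_sqrt
    have h1 : c * (∑ v, f v ^ 2) ≤ 1 := le_trans (hgap f hf.1) hf.2
    have h2 : f i ^ 2 ≤ ∑ v, f v ^ 2 :=
      Finset.single_le_sum (fun v (_ : v ∈ Finset.univ) => sq_nonneg (f v)) (Finset.mem_univ i)
    rw [le_div_iff₀ hc]
    nlinarith
  have hcpt : IsCompact K := Metric.isCompact_of_isClosed_isBounded hclosed hbdd
  have hne : K.Nonempty := by
    refine ⟨0, rfl, ?_⟩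
    have : Dform G (0 : V → ℝ) = 0 := by
      refine Finset.sum_eq_zero fun u _ => Finset.sum_eq_zero fun v _ => by norm_num
    rw [this]; norm_num
  obtain ⟨f0, hf0K, hmax⟩ := hcpt.exists_isMaxOn hne (continuous_Bform G x).continuousOn
  set m := Bform G x f0 with hm
  have hBw : Bform G x (ind w) = 1 := by
    rw [Bform, Finset.sum_eq_single w]
    · simp [ind]
    · intro b _ hb; simp [ind, hb]
    · intro h; exact absurd hw h
  set De := Dform G (ind w) with hDe
  have hDe0 : 0 ≤ De := Dform_nonneg G (ind w)
  set t : ℝ := 1 / (De + 1) with ht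
  have htpos : 0 < t := by rw [ht]; positivity
  have hmemt : t • ind w ∈ K := by
    constructor
    · show t * ind w x = 0
      simp only [ind]
      rw [if_neg (Ne.symm hwx)]
      ring
    · show Dform G (t • ind w) ≤ 1
      rw [Dform_smul, ← hDe, ht]
      rw [div_pow, one_pow, div_mul_eq_mul_div, div_le_one (by positivity)]
      nlinarith
  have hmpos : 0 < m := by
    have h1 : Bform G x (t • ind w) ≤ m := hmax hmemt
    have h2 : Bform G x (t • ind w) = t ^ 2 := by rw [Bform_smul, hBw, mul_one]
    have : t ^ 2 ≤ m := by rw [← h2]; exact h1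
    nlinarith
  have hglobal : ∀ g : V → ℝ, g x = 0 → Bform G x g ≤ m * Dform G g := by
    intro g hgx
    by_cases hD : Dform G g = 0
    · have hz : ∀ v, g v = 0 := by
        apply sumsq_eq_zero
        have := hgap g hgx
        rw [hD] at this
        have hnn : 0 ≤ ∑ v, g v ^ 2 := Finset.sum_nonneg fun v _ => sq_nonneg _
        nlinarith
      have : Bform G x g = 0 := Finset.sum_eq_zero fun v _ => by rw [hz v]; ring
      rw [this, hD, mul_zero]
    · have hDpos : 0 < Dform G g := lt_of_le_of_ne (Dform_nonneg G g) (Ne.symm hD)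
      set s : ℝ := (Real.sqrt (Dform G g))⁻¹ with hs
      have hs2 : s ^ 2 = (Dform G g)⁻¹ := by
        rw [hs, ← Real.sqrt_inv, Real.sq_sqrt (by positivity)]
      have hmem : s • g ∈ K := by
        constructor
        · show s * g x = 0; rw [hgx, mul_zero]
        · show Dform G (s • g) ≤ 1
          rw [Dform_smul, hs2, inv_mul_cancel₀ hD]
      have h1 : Bform G x (s • g) ≤ m := hmax hmem
      have h2 : Bform G x (s • g) = s ^ 2 * Bform G x g := Bform_smul G x g s
      rw [h2, hs2] at h1
      calc Bform G x g = ((Dform G g)⁻¹ * Bform G x g) * Dform G g := by field_simp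
        _ ≤ m * Dform G g := mul_le_mul_of_nonneg_right h1 (le_of_lt hDpos)
  have hD1 : Dform G f0 = 1 := by
    have h1 : m ≤ m * Dform G f0 := by
      have := hglobal f0 hf0K.1
      rwa [← hm] at this
    have h2 : 1 ≤ Dform G f0 := by
      by_contra h
      push_neg at h
      nlinarith
    exact le_antisymm hf0K.2 h2
  exact ⟨m, hmpos, hglobal, f0, hf0K.1, hD1, rfl⟩


lemma linear_coeff_zero {β γ : ℝ} (hγ : 0 ≤ γ) (h : ∀ t : ℝ, 0 ≤ β * t + γ * t ^ 2) :
    β = 0 := by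
  have hγ1 : (0 : ℝ) < γ + 1 := by linarith
  have h1 := h (-β / (γ + 1))
  have h2 : β * (-β / (γ + 1)) + γ * (-β / (γ + 1)) ^ 2 = -β ^ 2 / (γ + 1) ^ 2 := by
    field_simp
    ring
  rw [h2] at h1
  have h3 : β ^ 2 ≤ 0 := by
    have h4 : (0 : ℝ) < (γ + 1) ^ 2 := by positivity
    rw [le_div_iff₀ h4] at h1
    nlinarith
  nlinarith [sq_nonneg β]

lemma euler_lagrange (G : SimpleGraph V) (x : V) {m : ℝ} (hm : 0 < m)
    (hglobal : ∀ g : V → ℝ, g x = 0 → Bform G x g ≤ m * Dform G g)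
    {f : V → ℝ} (hfx : f x = 0) (heq : Bform G x f = m * Dform G f) :
    ∀ v : V, v ≠ x →
      2 * m * lap G f v = (if v ∈ (bdry G).erase x then f v else 0) := by
  intro v hv
  have hindx : ind v x = 0 := by
    simp only [ind]
    rw [if_neg (Ne.symm hv)]
  set β : ℝ := 2 * (m * Lform G f (ind v) - BLform G x f (ind v)) with hβ
  set γ : ℝ := m * Dform G (ind v) - Bform G x (ind v) with hγdef
  have hγ : 0 ≤ γ := by
    have := hglobal (ind v) hindx
    rw [hγdef]; linarith
  have hq : ∀ t : ℝ, 0 ≤ β * t + γ * t ^ 2 := by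
    intro t
    have h1 : (f + t • ind v) x = 0 := by
      simp only [Pi.add_apply, Pi.smul_apply, smul_eq_mul, hfx, hindx]
      ring
    have h2 := hglobal (f + t • ind v) h1
    rw [Dform_add_smul, Bform_add_smul] at h2
    rw [hβ, hγdef]
    nlinarith [h2, heq]
  have hβ0 : β = 0 := linear_coeff_zero hγ hq
  have h3 : m * Lform G f (ind v) = BLform G x f (ind v) := by
    rw [hβ] at hβ0; linarith
  rw [Lform_ind] at h3
  rw [BLform_ind] at h3
  rw [← h3]; ring

lemma green_identity (G : SimpleGraph V) (x : V) {lam : ℝ} {f : V → ℝ} (hfx : f x = 0)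
    (hint : ∀ w, w ∉ bdry G → w ≠ x → lap G f w = 0)
    (hbd : ∀ w ∈ bdry G, w ≠ x → lap G f w = lam * f w) :
    Dform G f = 2 * (lam * Bform G x f) := by
  rw [Dform_eq_lap]
  congr 1
  have key : ∀ v ∈ (Finset.univ : Finset V),
      f v * lap G f v = if v ∈ (bdry G).erase x then lam * f v ^ 2 else 0 := by
    intro v _
    by_cases hvx : v = x
    · subst hvx
      rw [if_neg (fun h => (Finset.mem_erase.mp h).1 rfl), hfx]
      ring
    · by_cases hvb : v ∈ bdry G
      · rw [if_pos (Finset.mem_erase.mpr ⟨hvx, hvb⟩), hbd v hvb hvx]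
        ring
      · rw [if_neg (fun h => hvb (Finset.mem_erase.mp h).2), hint v hvb hvx]
        ring
  rw [Finset.sum_congr rfl key, Finset.sum_ite_mem, Finset.univ_inter, Bform, Finset.mul_sum]

lemma eq_zero_of_Dform_eq_zero (G : SimpleGraph V) (hconn : G.Connected) {x : V} {f : V → ℝ}
    (hfx : f x = 0) (hD : Dform G f = 0) : ∀ v, f v = 0 := by
  have hedge : ∀ u v : V, G.Adj u v → f u = f v := by
    intro u v hadj
    have h1 := (Finset.sum_eq_zero_iff_of_nonneg
      (fun w (_ : w ∈ (Finset.univ : Finset V)) =>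
        Finset.sum_nonneg fun z _ => sq_nonneg (f w - f z))).mp hD u (Finset.mem_univ u)
    have h2 := (Finset.sum_eq_zero_iff_of_nonneg
      (fun z _ => sq_nonneg (f u - f z))).mp h1 v
        ((SimpleGraph.mem_neighborFinset G u v).mpr hadj)
    have h3 := pow_eq_zero_iff two_ne_zero |>.mp h2
    linarith [sub_eq_zero.mp h3]
  have key : ∀ (u v : V) (p : G.Walk u v), f u = 0 → f v = 0 := by
    intro u v p
    induction p with
    | nil => exact fun h => h
    | cons hadj q ih => intro h0; apply ih; rw [← hedge _ _ hadj, h0]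
  intro v
  obtain ⟨p⟩ := hconn x v
  exact key x v p hfx

lemma nbr_singleton {G : SimpleGraph V} {u p : V} (hdeg : G.degree u = 1)
    (hp : p ∈ G.neighborFinset u) : G.neighborFinset u = {p} := by
  have hcard : (G.neighborFinset u).card = 1 := by
    rw [SimpleGraph.card_neighborFinset_eq_degree]; exact hdeg
  obtain ⟨a, ha⟩ := Finset.card_eq_one.mp hcard
  rw [ha] at hp ⊢
  rw [Finset.mem_singleton.mp hp]

lemma mem_bdry {G : SimpleGraph V} {v : V} : v ∈ bdry G ↔ G.degree v = 1 := by
  rw [bdry, Finset.mem_filter]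
  exact ⟨fun h => h.2, fun h => ⟨Finset.mem_univ v, h⟩⟩

lemma dist_lt_card {G : SimpleGraph V} (hG : G.IsTree) (x v : V) :
    G.dist x v < Fintype.card V := by
  obtain ⟨p, hp, hl⟩ := hG.isConnected.exists_path_of_dist x v
  rw [← hl]
  exact hp.length_lt

lemma exists_other_leaf {G : SimpleGraph V} (hG : G.IsTree) {x : V} (hx : x ∈ bdry G) :
    ∃ w, w ∈ (bdry G).erase x := by
  obtain ⟨v, _, hv⟩ := Finset.exists_max_image (Finset.univ : Finset V) (G.dist x)
    ⟨x, Finset.mem_univ x⟩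
  have hxdeg : G.degree x = 1 := mem_bdry.mp hx
  obtain ⟨x', hx'⟩ : ∃ x', x' ∈ G.neighborFinset x := by
    have : (G.neighborFinset x).card = 1 := by
      rw [SimpleGraph.card_neighborFinset_eq_degree]; exact hxdeg
    obtain ⟨a, ha⟩ := Finset.card_eq_one.mp this
    exact ⟨a, by rw [ha]; exact Finset.mem_singleton_self a⟩
  have hadjx : G.Adj x x' := (SimpleGraph.mem_neighborFinset G x x').mp hx'
  have hd1 : G.dist x x' = 1 := SimpleGraph.dist_eq_one_iff_adj.mpr hadjx
  have hvpos : G.dist x v ≠ 0 := by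
    have := hv x' (Finset.mem_univ x')
    omega
  obtain ⟨p, hpadj, hpd⟩ := exists_parent hG hvpos
  have hforall : ∀ u ∈ G.neighborFinset v, u = p := by
    intro u hu
    have hadj : G.Adj v u := (SimpleGraph.mem_neighborFinset G v u).mp hu
    rcases adj_dist_cases hG (x := x) hadj with h | h
    · exfalso
      have := hv u (Finset.mem_univ u)
      omega
    · exact parent_unique hG hadj hpadj (by omega) hpd
  have hnbr : G.neighborFinset v = {p} := by
    apply Finset.eq_singleton_iff_unique_mem.mpr
    exact ⟨(SimpleGraph.mem_neighborFinset G v p).mpr hpadj, hforall⟩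
  have hvb : v ∈ bdry G := by
    rw [mem_bdry, ← SimpleGraph.card_neighborFinset_eq_degree, hnbr]
    exact Finset.card_singleton p
  refine ⟨v, Finset.mem_erase.mpr ⟨?_, hvb⟩⟩
  intro hveq
  rw [hveq] at hvpos
  exact hvpos (SimpleGraph.dist_self)

lemma flow_zero_prop {G : SimpleGraph V} {x : V} {lam : ℝ} {φ : V → ℝ}
    (hint : ∀ w, w ∉ bdry G → w ≠ x → lap G φ w = 0)
    (hbd : ∀ w ∈ bdry G, w ≠ x → lap G φ w = lam * φ w)
    (hnn : ∀ v, 0 ≤ φ v) {u : V} (hu : u ≠ x) (h0 : φ u = 0) :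
    ∀ v ∈ G.neighborFinset u, φ v = 0 := by
  have hlap : lap G φ u = 0 := by
    by_cases hb : u ∈ bdry G
    · rw [hbd u hb hu, h0, mul_zero]
    · exact hint u hb hu
  have hsum : ∑ v ∈ G.neighborFinset u, φ v = 0 := by
    have : lap G φ u = - ∑ v ∈ G.neighborFinset u, φ v := by
      rw [lap, ← Finset.sum_neg_distrib]
      exact Finset.sum_congr rfl fun v _ => by rw [h0]; ring
    rw [this] at hlap
    linarith
  exact fun v hv => (Finset.sum_eq_zero_iff_of_nonneg (fun z _ => hnn z)).mp hsum v hv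

lemma flow_zero_everywhere {G : SimpleGraph V} (hG : G.IsTree) {x : V} (hx : x ∈ bdry G)
    {lam : ℝ} {φ : V → ℝ}
    (hint : ∀ w, w ∉ bdry G → w ≠ x → lap G φ w = 0)
    (hbd : ∀ w ∈ bdry G, w ≠ x → lap G φ w = lam * φ w)
    (hnn : ∀ v, 0 ≤ φ v) (hφx : φ x = 0)
    {a : V} (ha : a ≠ x) (h0 : φ a = 0) : ∀ v, φ v = 0 := by
  have hconn := hG.isConnected
  -- Step 1: find b at distance 1 with φ b = 0
  have step1 : ∀ n, ∀ a : V, G.dist x a = n + 1 → φ a = 0 →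
      ∃ b, G.dist x b = 1 ∧ φ b = 0 := by
    intro n
    induction n with
    | zero => exact fun a hd h0 => ⟨a, hd, h0⟩
    | succ n ih =>
      intro a hd h0'
      have hd0 : G.dist x a ≠ 0 := by omega
      have hax : a ≠ x := by
        intro h; rw [h, SimpleGraph.dist_self] at hd; omega
      have hpadj := par_adj hG hd0
      have hpd := par_dist hG hd0
      have hp0 : φ (par G hG x a) = 0 :=
        flow_zero_prop hint hbd hnn hax h0' _ ((SimpleGraph.mem_neighborFinset G a _).mpr hpadj)
      exact ih (par G hG x a) (by omega) hp0
  obtain ⟨n, hn⟩ : ∃ n, G.dist x a = n + 1 := by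
    have : G.dist x a ≠ 0 := by
      intro h
      exact ha ((hconn.dist_eq_zero_iff).mp h).symm
    exact ⟨G.dist x a - 1, by omega⟩
  obtain ⟨b, hbd1, hb0⟩ := step1 n a hn h0
  have hadjxb : G.Adj x b := SimpleGraph.dist_eq_one_iff_adj.mp hbd1
  have hnbrx : G.neighborFinset x = {b} :=
    nbr_singleton (mem_bdry.mp hx) ((SimpleGraph.mem_neighborFinset G x b).mpr hadjxb)
  -- Step 2: everything is zero by induction on distance
  have main : ∀ n, ∀ v : V, G.dist x v = n → φ v = 0 := by
    intro n
    induction n using Nat.strong_induction_on with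
    | _ n ih =>
      intro v hv
      match n, ih with
      | 0, _ =>
        have : x = v := (hconn.dist_eq_zero_iff).mp hv
        rw [← this]; exact hφx
      | 1, _ =>
        have hadj : G.Adj x v := SimpleGraph.dist_eq_one_iff_adj.mp hv
        have : v ∈ G.neighborFinset x := (SimpleGraph.mem_neighborFinset G x v).mpr hadj
        rw [hnbrx, Finset.mem_singleton] at this
        rw [this]; exact hb0
      | Nat.succ (Nat.succ n), ih =>
        have hd0 : G.dist x v ≠ 0 := by omega
        have hpadj := par_adj hG hd0
        have hpd := par_dist hG hd0
        have hpx : par G hG x v ≠ x := by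
          intro h
          rw [h] at hpd
          rw [SimpleGraph.dist_self] at hpd
          omega
        have hp0 : φ (par G hG x v) = 0 := ih (n + 1) (by omega) _ (by omega)
        exact flow_zero_prop hint hbd hnn hpx hp0 v
          ((SimpleGraph.mem_neighborFinset G _ v).mpr hpadj.symm)
  exact fun v => main (G.dist x v) v rfl

lemma descend {G : SimpleGraph V} (hG : G.IsTree) {x : V} {lam : ℝ} {φ : V → ℝ}
    (hlam : 0 < lam)
    (hint : ∀ w, w ∉ bdry G → w ≠ x → lap G φ w = 0)
    (hbd : ∀ w ∈ bdry G, w ≠ x → lap G φ w = lam * φ w)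
    (hstep : ∀ v : V, G.dist x v ≠ 0 → φ (par G hG x v) ≤ φ v) :
    ∀ v : V, G.dist x v ≠ 0 → φ v = φ (par G hG x v) → φ v = 0 := by
  have main : ∀ k, ∀ v : V, Fintype.card V = G.dist x v + k → G.dist x v ≠ 0 →
      φ v = φ (par G hG x v) → φ v = 0 := by
    intro k
    induction k with
    | zero =>
      intro v hcard _ _
      have := dist_lt_card hG x v
      omega
    | succ k ih =>
      intro v hcard hd0 hconst
      set p := par G hG x v with hp
      have hpadj := par_adj hG hd0
      have hpd := par_dist hG hd0
      have hvx : v ≠ x := by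
        intro h; rw [h, SimpleGraph.dist_self] at hd0; exact hd0 rfl
      by_cases hvb : v ∈ bdry G
      · -- leaf: lap φ v = φ v - φ p = 0 and = lam * φ v
        have hnbr : G.neighborFinset v = {p} :=
          nbr_singleton (mem_bdry.mp hvb) ((SimpleGraph.mem_neighborFinset G v p).mpr hpadj)
        have hlap : lap G φ v = φ v - φ p := by
          rw [lap, hnbr, Finset.sum_singleton]
        have h1 := hbd v hvb hvx
        rw [hlap, ← hconst] at h1
        have : lam * φ v = 0 := by linarith
        rcases mul_eq_zero.mp this with h | h
        · exact absurd h (ne_of_gt hlam)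
        · exact h
      · -- interior
        have hlap := hint v hvb hvx
        have hchild : ∀ u ∈ G.neighborFinset v, u ≠ p →
            G.dist x u = G.dist x v + 1 ∧ par G hG x u = v := by
          intro u hu hup
          have hadj : G.Adj v u := (SimpleGraph.mem_neighborFinset G v u).mp hu
          rcases adj_dist_cases hG (x := x) hadj with h | h
          · refine ⟨h, ?_⟩
            exact par_eq hG hadj.symm (by omega)
          · exfalso
            exact hup (parent_unique hG hadj hpadj (by omega) hpd)
        have hdiffs : ∀ u ∈ G.neighborFinset v, φ v - φ u ≤ 0 := by
          intro u hu
          by_cases hup : u = p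
          · rw [hup, ← hconst]; linarith
          · obtain ⟨hdu, hpu⟩ := hchild u hu hup
            have := hstep u (by omega)
            rw [hpu] at this
            linarith
        have hall : ∀ u ∈ G.neighborFinset v, φ v - φ u = 0 := by
          intro u hu
          have hsum0 : ∑ u ∈ G.neighborFinset v, (φ v - φ u) = 0 := hlap
          have := (Finset.sum_eq_zero_iff_of_nonpos hdiffs).mp hsum0 u hu
          exact this
        -- find a child c ≠ p
        have hcard2 : 1 < (G.neighborFinset v).card := by
          have h1 : (G.neighborFinset v).card ≠ 1 := by
            rw [SimpleGraph.card_neighborFinset_eq_degree]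
            exact fun h => hvb (mem_bdry.mpr h)
          have h2 : 0 < (G.neighborFinset v).card :=
            Finset.card_pos.mpr ⟨p, (SimpleGraph.mem_neighborFinset G v p).mpr hpadj⟩
          omega
        obtain ⟨c, hc, hcp⟩ := Finset.exists_mem_ne hcard2 p
        obtain ⟨hdc, hpc⟩ := hchild c hc hcp
        have hφc : φ c = φ v := by
          have := hall c hc; linarith
        have hc0 : φ c = 0 := by
          apply ih c (by omega) (by omega)
          rw [hpc, ← hφc]
        rw [← hφc]; exact hc0
  intro v hd0 hconst
  have hlt := dist_lt_card hG x v
  exact main (Fintype.card V - G.dist x v) v (by omega) hd0 hconst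

end Aux

/-- For every finite tree `G` and boundary vertex `x`:
`σ(G,x) = σ̂(G,x)`. -/
theorem sigma_eq_sigmaHat (G : SimpleGraph V) (hG : G.IsTree)
    (x : V) (hx : x ∈ bdry G) :
    sigma G x = sigmaHat G x := by
  classical
  have hconn := hG.isConnected
  obtain ⟨w, hw⟩ := exists_other_leaf hG hx
  obtain ⟨m, hm, hglobal, f, hfx, hDf, hBf⟩ := exists_maximizer G hconn x w hw
  set lam : ℝ := 1 / (2 * m) with hlamdef
  have hlampos : 0 < lam := by rw [hlamdef]; positivity
  set g : V → ℝ := gfun G hG x f with hgdef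
  have hgx : g x = 0 := gfun_x hG x f
  have hgnn : ∀ v, 0 ≤ g v := gfun_nonneg hG x f
  have hkey : ∀ u v : V, G.Adj u v → G.dist x v + 1 = G.dist x u →
      (g u - g v) ^ 2 = (f u - f v) ^ 2 := by
    intro u v hadj hd
    have he := gfun_edge hG f hadj hd
    rw [hgdef]
    rw [he]
    rw [add_sub_cancel_left, sq_abs]
  have hDg : Dform G g = Dform G f := by
    refine Finset.sum_congr rfl fun u _ => Finset.sum_congr rfl fun v hv => ?_
    have hadj : G.Adj u v := (SimpleGraph.mem_neighborFinset G u v).mp hv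
    rcases adj_dist_cases hG (x := x) hadj with h | h
    · have h2 := hkey v u hadj.symm (by omega)
      have h3 : (g u - g v) ^ 2 = (g v - g u) ^ 2 := by ring
      have h4 : (f v - f u) ^ 2 = (f u - f v) ^ 2 := by ring
      rw [h3, h2, h4]
    · exact hkey u v hadj (by omega)
  have hBfg : Bform G x f ≤ Bform G x g := by
    refine Finset.sum_le_sum fun w' _ => ?_
    have h1 := abs_le_gfun hG hfx w'
    calc f w' ^ 2 = |f w'| ^ 2 := (sq_abs _).symm
      _ ≤ g w' ^ 2 := by
          have h2 : (0:ℝ) ≤ |f w'| := abs_nonneg _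
          nlinarith
  have hBg_le : Bform G x g ≤ m := by
    have h := hglobal g hgx
    rwa [hDg, hDf, mul_one] at h
  have hBg : Bform G x g = m := le_antisymm hBg_le (by rw [← hBf]; exact hBfg)
  have hDg1 : Dform G g = 1 := by rw [hDg, hDf]
  have hEL := euler_lagrange G x hm hglobal hgx (by rw [hBg, hDg1, mul_one])
  have hint_g : ∀ w', w' ∉ bdry G → w' ≠ x → lap G g w' = 0 := by
    intro w' hb hxne
    have h := hEL w' hxne
    rw [if_neg (fun hmem => hb (Finset.mem_erase.mp hmem).2)] at h
    have h2 : (2 * m) * lap G g w' = 0 := by linarith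
    rcases mul_eq_zero.mp h2 with h3 | h3
    · exfalso; nlinarith
    · exact h3
  have hbd_g : ∀ w' ∈ bdry G, w' ≠ x → lap G g w' = lam * g w' := by
    intro w' hb hxne
    have h := hEL w' hxne
    rw [if_pos (Finset.mem_erase.mpr ⟨hxne, hb⟩)] at h
    rw [hlamdef]
    field_simp
    linarith
  have hgne : g ≠ 0 := by
    intro h0
    have hB0 : Bform G x g = 0 := by
      refine Finset.sum_eq_zero fun v _ => ?_
      rw [h0]
      norm_num
    rw [hBg] at hB0
    linarith
  have hflow : IsFlow G lam x g := ⟨hgne, hint_g, hbd_g⟩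
  have hstrict : ∀ y z : V, G.Adj y z → G.dist x z < G.dist x y → g z < g y := by
    intro y z hadj hlt
    have hd : G.dist x z + 1 = G.dist x y := by
      rcases adj_dist_cases hG (x := x) hadj with h | h
      · omega
      · omega
    have hedge : g y = g z + |f y - f z| := gfun_edge hG f hadj hd
    have hle : g z ≤ g y := by
      rw [hedge]
      have := abs_nonneg (f y - f z)
      linarith
    rcases lt_or_eq_of_le hle with h | h
    · exact h
    · exfalso
      have hpy : par G hG x y = z := par_eq hG hadj hd
      have hconst : g y = g (par G hG x y) := by rw [hpy, ← h]
      have hd0 : G.dist x y ≠ 0 := by omega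
      have hstep : ∀ v : V, G.dist x v ≠ 0 → g (par G hG x v) ≤ g v := by
        intro v hv
        have hs := gfun_step hG f hv
        rw [hgdef, hs]
        have := abs_nonneg (f v - f (par G hG x v))
        linarith
      have hy0 : g y = 0 := descend hG hlampos hint_g hbd_g hstep y hd0 hconst
      have hyx : y ≠ x := by
        intro he
        rw [he, SimpleGraph.dist_self] at hd0
        exact hd0 rfl
      have hall := flow_zero_everywhere hG hx hint_g hbd_g hgnn hgx hyx hy0
      have hB0 : Bform G x g = 0 := Finset.sum_eq_zero fun v _ => by rw [hall v]; ring
      rw [hBg] at hB0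
      linarith
  have hmem : lam ∈ SigmaSet G x := ⟨le_of_lt hlampos, g, hflow, hgx, hstrict⟩
  have hlower : ∀ b ∈ SigmaHatSet G x, lam ≤ b := by
    rintro b ⟨hb0, f', hflow', hf'x⟩
    obtain ⟨hf'ne, hint', hbd'⟩ := hflow'
    have hgreen : Dform G f' = 2 * (b * Bform G x f') := green_identity G x hf'x hint' hbd'
    have hBpos : 0 < Bform G x f' := by
      rcases lt_or_eq_of_le (Bform_nonneg G x f') with h | h
      · exact h
      · exfalso
        have hD0 : Dform G f' = 0 := by rw [hgreen, ← h]; ring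
        have hz := eq_zero_of_Dform_eq_zero G hconn hf'x hD0
        exact hf'ne (funext hz)
    have hB := hglobal f' hf'x
    rw [hgreen] at hB
    rw [hlamdef, div_le_iff₀ (by positivity)]
    nlinarith
  have hsub : SigmaSet G x ⊆ SigmaHatSet G x := by
    rintro b ⟨hb0, f', hflow', hf'x, _⟩
    exact ⟨hb0, f', hflow', hf'x⟩
  have hlower' : ∀ b ∈ SigmaSet G x, lam ≤ b := fun b hb => hlower b (hsub hb)
  have h1 : sigma G x = lam :=
    le_antisymm (csInf_le ⟨lam, hlower'⟩ hmem) (le_csInf ⟨lam, hmem⟩ hlower')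
  have h2 : sigmaHat G x = lam :=
    le_antisymm (csInf_le ⟨lam, hlower⟩ (hsub hmem)) (le_csInf ⟨lam, hsub hmem⟩ hlower)
  rw [h1, h2]

end Steklov
end
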